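/- arXiv:2311.07496 — 4 statements merged into one kernel-verified Lean document; each statement's English description precedes it below -/
import Mathlib

section
/- Let a be a positive integer. Then MO(a;n) = 0 for every n < a(a+1)/2, and for every integer j with 0 ≤ j ≤ a one has MO(a; a(a+1)/2 + j) = c_3(j). (Equivalently, q^{-a(a+1)/2}·𝒰_a(q) agrees with ∏_{n≥1}(1−q^n)^{-3} up to an error of order O(q^{a+1}).) -/
open Finset

/-- `MO a n` is MacMahon's coefficient: the sum of the products `s_1 ⋯ s_a` over all
strictly increasing tuples `0 < k_1 < ⋯ < k_a` of positive integers and positive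
integers `s_1, …, s_a` with `s_1*k_1 + ⋯ + s_a*k_a = n` (all such data satisfy
`k_i, s_i ≤ n`, so we may sum over a finite set); in particular `MO a 0 = 0` for `a ≥ 1`. -/
def MO (a n : ℕ) : ℕ :=
  ∑ f ∈ Finset.univ.filter (fun f : Fin a → Fin (n + 1) × Fin (n + 1) =>
      (∀ i, 0 < ((f i).1 : ℕ) ∧ 0 < ((f i).2 : ℕ)) ∧
      (∀ i j : Fin a, i < j → (f i).1 < (f j).1) ∧
      (∑ i, ((f i).2 : ℕ) * ((f i).1 : ℕ)) = n),
    ∏ i, ((f i).2 : ℕ)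

/-- `c3 n` is the number of 3-colored partitions of `n`, i.e. the `n`-th coefficient of
the formal power series `∏_{j ≥ 1} (1 - q^j)^{-3}`; in particular `c3 0 = 1`. -/
def c3 (n : ℕ) : ℕ :=
  ∑ x ∈ (Finset.range (n+1) ×ˢ Finset.range (n+1) ×ˢ Finset.range (n+1)).filter
      (fun x : ℕ × ℕ × ℕ => x.1 + x.2.1 + x.2.2 = n),
    Fintype.card (Nat.Partition x.1) * Fintype.card (Nat.Partition x.2.1) *
      Fintype.card (Nat.Partition x.2.2)


lemma gauss (a : ℕ) : ∑ i ∈ range a, (i+1) = a * (a+1) / 2 := by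
  have h1 : ∑ i ∈ range a, (i+1) = ∑ i ∈ range (a+1), i := by
    rw [Finset.sum_range_succ']
    simp
  have h2 : (∑ i ∈ range (a+1), i) * 2 = a * (a + 1) := by
    rw [Finset.sum_range_id_mul_two (a+1)]
    simp [Nat.mul_comm]
  omega

lemma strictMono_bound {a : ℕ} {k : Fin a → ℕ} (hk : StrictMono k)
    (h1 : ∀ i, 1 ≤ k i) : ∀ i : Fin a, (i:ℕ) + 1 ≤ k i := by
  intro ⟨t, ht⟩
  have hcoe : ∀ (t : ℕ) (h : t < a), ((⟨t, h⟩ : Fin a) : ℕ) = t := fun _ _ => rfl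
  induction t with
  | zero => rw [hcoe]; simpa using h1 _
  | succ t ih =>
      have h' : t < a := by omega
      have hlt := hk (a := ⟨t, h'⟩) (b := ⟨t+1, ht⟩) (by simp [Fin.lt_def])
      have hih := ih h'
      rw [hcoe] at *
      omega

def gv (a : ℕ) (g : Fin a → ℕ) (r : ℕ) : ℕ := if h : r < a then g ⟨r,h⟩ else 0

def ps (a : ℕ) (g : Fin a → ℕ) (t : ℕ) : ℕ := ∑ r ∈ range (t+1), gv a g r

lemma ps_succ (a : ℕ) (g : Fin a → ℕ) (t : ℕ) :
    ps a g (t+1) = ps a g t + gv a g (t+1) := Finset.sum_range_succ _ _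

lemma ps_mono (a : ℕ) (g : Fin a → ℕ) : Monotone (ps a g) := by
  intro s t hst
  exact Finset.sum_le_sum_of_subset (Finset.range_subset_range.2 (by omega))

def gaps (a : ℕ) (k : Fin a → ℕ) (i : Fin a) : ℕ :=
  if h : (i:ℕ) = 0 then k i - 1
  else k i - k ⟨(i:ℕ)-1, Nat.lt_of_le_of_lt (Nat.pred_le _) i.isLt⟩ - 1

def kof (a : ℕ) (g : Fin a → ℕ) (i : Fin a) : ℕ := (i:ℕ) + 1 + ps a g (i:ℕ)

lemma kof_strictMono (a : ℕ) (g : Fin a → ℕ) : StrictMono (kof a g) := by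
  intro i i' h
  have h2 := ps_mono a g (show (i:ℕ) ≤ (i':ℕ) from le_of_lt h)
  have h3 : (i:ℕ) < (i':ℕ) := h
  simp only [kof]; omega

lemma kof_pos (a : ℕ) (g : Fin a → ℕ) (i : Fin a) : 1 ≤ kof a g i := by
  simp only [kof]; omega

lemma kof_gaps {a : ℕ} {k : Fin a → ℕ} (hk : StrictMono k) (h1 : ∀ i, 1 ≤ k i) :
    ∀ i, kof a (gaps a k) i = k i := by
  intro ⟨t, ht⟩
  induction t with
  | zero =>
      have h0 : 0 < a := ht
      simp only [kof, ps]
      rw [Finset.sum_range_one]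
      have : gv a (gaps a k) 0 = k ⟨0, ht⟩ - 1 := by
        rw [gv, dif_pos h0, gaps, dif_pos rfl]
      rw [this]
      have := h1 ⟨0, ht⟩
      omega
  | succ t ih =>
      have h' : t < a := by omega
      have ihv := ih h'
      simp only [kof] at ihv ⊢
      rw [ps_succ]
      have hgv : gv a (gaps a k) (t+1) = k ⟨t+1, ht⟩ - k ⟨t, h'⟩ - 1 := by
        rw [gv, dif_pos ht, gaps, dif_neg (by simp)]
        rfl
      have hlt := hk (a := ⟨t, h'⟩) (b := ⟨t+1, ht⟩) (by simp [Fin.lt_def])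
      rw [hgv]
      omega

lemma gaps_kof (a : ℕ) (g : Fin a → ℕ) : gaps a (kof a g) = g := by
  funext ⟨t, ht⟩
  match t with
  | 0 =>
      have e1 : gaps a (kof a g) ⟨0, ht⟩ = kof a g ⟨0, ht⟩ - 1 := by
        rw [gaps, dif_pos rfl]
      have e2 : kof a g ⟨0, ht⟩ = 0 + 1 + ps a g 0 := rfl
      have e3 : ps a g 0 = gv a g 0 := Finset.sum_range_one _
      have e4 : gv a g 0 = g ⟨0, ht⟩ := by rw [gv, dif_pos ht]
      rw [e1, e2, e3, e4]
      omega
  | t+1 =>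
      have h' : t < a := by omega
      have e1 : gaps a (kof a g) ⟨t+1, ht⟩ = kof a g ⟨t+1, ht⟩ - kof a g ⟨t, h'⟩ - 1 := by
        rw [gaps, dif_neg (by simp)]
        rfl
      have e2 : kof a g ⟨t+1, ht⟩ = (t+1) + 1 + ps a g (t+1) := rfl
      have e3 : kof a g ⟨t, h'⟩ = t + 1 + ps a g t := rfl
      have e4 := ps_succ a g t
      have e5 : gv a g (t+1) = g ⟨t+1, ht⟩ := by rw [gv, dif_pos ht]
      rw [e1, e2, e3]
      omega

lemma sum_ps_swap (N : ℕ) (f : ℕ → ℕ) :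
    ∑ i ∈ range N, ∑ r ∈ range (i+1), f r = ∑ r ∈ range N, f r * (N - r) := by
  induction N with
  | zero => simp
  | succ N ih =>
      rw [Finset.sum_range_succ, ih]
      have h1 : ∀ r ∈ range N, f r * (N + 1 - r) = f r * (N - r) + f r := by
        intro r hr
        rw [Finset.mem_range] at hr
        have : N + 1 - r = (N - r) + 1 := by omega
        rw [this, Nat.mul_succ]
      conv_rhs => rw [Finset.sum_range_succ, Finset.sum_congr rfl h1, Finset.sum_add_distrib]
      simp [Finset.sum_range_succ]
      ring

lemma sum_ps (a : ℕ) (g : Fin a → ℕ) :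
    ∑ i : Fin a, ps a g (i:ℕ) = ∑ r : Fin a, g r * (a - (r:ℕ)) := by
  rw [Fin.sum_univ_eq_sum_range (fun i => ps a g i) a]
  have : ∑ i ∈ range a, ps a g i = ∑ r ∈ range a, gv a g r * (a - r) :=
    sum_ps_swap a (gv a g)
  rw [this, ← Fin.sum_univ_eq_sum_range (fun r => gv a g r * (a - r)) a]
  refine Finset.sum_congr rfl fun i _ => ?_
  rw [gv, dif_pos i.isLt]

def T (a : ℕ) : ℕ := ∑ i ∈ range a, (i+1)

lemma le_T (a : ℕ) : a ≤ T a := by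
  calc a = ∑ _i ∈ range a, 1 := by simp
  _ ≤ T a := Finset.sum_le_sum fun i _ => by omega

open scoped Classical in
noncomputable def F1 (a n : ℕ) : Finset ((Fin a → ℕ) × (Fin a → ℕ) × (Fin a → ℕ)) :=
  ((Fintype.piFinset fun _ => range (n+1)) ×ˢ (Fintype.piFinset fun _ => range (n+1)) ×ˢ
      (Fintype.piFinset fun _ => range (n+1))).filter
    fun p => StrictMono p.1 ∧ (∀ i, 1 ≤ p.1 i) ∧ (∀ i, p.2.2 i < p.2.1 i) ∧
      ∑ i, p.2.1 i * p.1 i = n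

open scoped Classical in
noncomputable def F2 (a j : ℕ) : Finset ((Fin a → ℕ) × (Fin a → ℕ) × (Fin a → ℕ)) :=
  ((Fintype.piFinset fun _ => range (j+1)) ×ˢ (Fintype.piFinset fun _ => range (j+1)) ×ˢ
      (Fintype.piFinset fun _ => range (j+1))).filter
    fun q => (∑ r : Fin a, q.1 r * (a - (r:ℕ))) + ∑ i, (q.2.1 i + q.2.2 i) * kof a q.1 i = j

lemma gv_sum_eq (a : ℕ) (g : Fin a → ℕ) :
    ∑ r ∈ range a, gv a g r * (a - r) = ∑ r : Fin a, g r * (a - (r:ℕ)) := by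
  rw [← Fin.sum_univ_eq_sum_range (fun r => gv a g r * (a - r)) a]
  refine Finset.sum_congr rfl fun i _ => ?_
  rw [gv, dif_pos i.isLt]

lemma ps_le (a : ℕ) (g : Fin a → ℕ) (i : Fin a) :
    ps a g (i:ℕ) ≤ ∑ r : Fin a, g r * (a - (r:ℕ)) := by
  rw [← gv_sum_eq]
  calc ps a g (i:ℕ) ≤ ∑ r ∈ range a, gv a g r :=
        Finset.sum_le_sum_of_subset (Finset.range_subset_range.2 i.isLt)
  _ ≤ ∑ r ∈ range a, gv a g r * (a - r) := by
        refine Finset.sum_le_sum fun r hr => ?_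
        rw [Finset.mem_range] at hr
        have : 1 ≤ a - r := by omega
        exact Nat.le_mul_of_pos_right _ (by omega)

lemma key_sum (a : ℕ) (g u v : Fin a → ℕ) :
    ∑ i, (u i + v i + 1) * kof a g i
      = (∑ i, (u i + v i) * kof a g i) + T a + ∑ r : Fin a, g r * (a - (r:ℕ)) := by
  have h1 : ∀ i ∈ (univ : Finset (Fin a)),
      (u i + v i + 1) * kof a g i = (u i + v i) * kof a g i + (((i:ℕ)+1) + ps a g (i:ℕ)) := by
    intro i _
    rw [kof]
    ring
  rw [Finset.sum_congr rfl h1, Finset.sum_add_distrib, Finset.sum_add_distrib, sum_ps,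
    Fin.sum_univ_eq_sum_range (fun i => i + 1) a]
  rw [T]
  omega

lemma cardF1_eq_cardF2 (a j : ℕ) (ha : 0 < a) :
    (F1 a (T a + j)).card = (F2 a j).card := by
  classical
  apply Finset.card_nbij'
    (i := fun p : (Fin a → ℕ) × (Fin a → ℕ) × (Fin a → ℕ) =>
      (gaps a p.1, p.2.2, fun i => p.2.1 i - 1 - p.2.2 i))
    (j := fun q : (Fin a → ℕ) × (Fin a → ℕ) × (Fin a → ℕ) =>
      (kof a q.1, fun i => q.2.1 i + q.2.2 i + 1, q.2.1))
  · rintro ⟨k, s, u⟩ hp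
    rw [Finset.mem_coe, F1, Finset.mem_filter] at hp
    try dsimp only at hp ⊢
    obtain ⟨-, hmono, hpos, hlt, hsum⟩ := hp
    have hk : ∀ i, kof a (gaps a k) i = k i := kof_gaps hmono hpos
    have hker := key_sum a (gaps a k) u (fun i => s i - 1 - u i)
    try dsimp only at hker
    have hs : ∀ i ∈ (univ : Finset (Fin a)),
        s i * k i = (u i + (s i - 1 - u i) + 1) * kof a (gaps a k) i := by
      intro i _
      rw [hk]
      have := hlt i
      congr 1
      omega
    rw [Finset.sum_congr rfl hs, hker] at hsum
    have hC : (∑ r : Fin a, gaps a k r * (a - (r:ℕ)))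
        + ∑ i, (u i + (s i - 1 - u i)) * kof a (gaps a k) i = j := by omega
    rw [Finset.mem_coe, F2, Finset.mem_filter]
    try dsimp only
    refine ⟨?_, hC⟩
    simp only [Finset.mem_product, Fintype.mem_piFinset, Finset.mem_range]
    have hXj : ∑ r : Fin a, gaps a k r * (a - (r:ℕ)) ≤ j := by omega
    have hYj : ∑ i, (u i + (s i - 1 - u i)) * kof a (gaps a k) i ≤ j := by omega
    refine ⟨fun r => ?_, fun i => ?_, fun i => ?_⟩
    · have h1 : gaps a k r ≤ gaps a k r * (a - (r:ℕ)) :=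
        Nat.le_mul_of_pos_right _ (by have := r.isLt; omega)
      have h2 : gaps a k r * (a - (r:ℕ)) ≤ ∑ r : Fin a, gaps a k r * (a - (r:ℕ)) :=
        Finset.single_le_sum (f := fun r : Fin a => gaps a k r * (a - (r:ℕ)))
          (fun _ _ => Nat.zero_le _) (Finset.mem_univ r)
      omega
    · have h1 : u i ≤ (u i + (s i - 1 - u i)) * kof a (gaps a k) i := by
        have := kof_pos a (gaps a k) i
        calc u i ≤ (u i + (s i - 1 - u i)) * 1 := by omega
        _ ≤ _ := Nat.mul_le_mul_left _ this
      have h2 : (u i + (s i - 1 - u i)) * kof a (gaps a k) i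
          ≤ ∑ i, (u i + (s i - 1 - u i)) * kof a (gaps a k) i :=
        Finset.single_le_sum (f := fun i : Fin a => (u i + (s i - 1 - u i)) * kof a (gaps a k) i)
          (fun _ _ => Nat.zero_le _) (Finset.mem_univ i)
      omega
    · have h1 : s i - 1 - u i ≤ (u i + (s i - 1 - u i)) * kof a (gaps a k) i := by
        have := kof_pos a (gaps a k) i
        calc s i - 1 - u i ≤ (u i + (s i - 1 - u i)) * 1 := by omega
        _ ≤ _ := Nat.mul_le_mul_left _ this
      have h2 : (u i + (s i - 1 - u i)) * kof a (gaps a k) i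
          ≤ ∑ i, (u i + (s i - 1 - u i)) * kof a (gaps a k) i :=
        Finset.single_le_sum (f := fun i : Fin a => (u i + (s i - 1 - u i)) * kof a (gaps a k) i)
          (fun _ _ => Nat.zero_le _) (Finset.mem_univ i)
      omega
  · rintro ⟨g, u, v⟩ hq
    rw [Finset.mem_coe, F2, Finset.mem_filter] at hq
    try dsimp only at hq ⊢
    obtain ⟨hmem, hC⟩ := hq
    simp only [Finset.mem_product, Fintype.mem_piFinset, Finset.mem_range] at hmem
    rw [Finset.mem_coe, F1, Finset.mem_filter]
    try dsimp only
    have hY : ∑ i, (u i + v i) * kof a g i ≤ j := by omega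
    have hX : ∑ r : Fin a, g r * (a - (r:ℕ)) ≤ j := by omega
    have hT := le_T a
    refine ⟨?_, kof_strictMono a g, kof_pos a g, fun i => by omega, ?_⟩
    · simp only [Finset.mem_product, Fintype.mem_piFinset, Finset.mem_range]
      refine ⟨fun i => ?_, fun i => ?_, fun i => ?_⟩
      · have h1 := ps_le a g i
        have h2 : (i:ℕ) + 1 ≤ a := i.isLt
        rw [kof]
        omega
      · have h1 : (u i + v i) * kof a g i ≤ ∑ i, (u i + v i) * kof a g i :=
          Finset.single_le_sum (f := fun i : Fin a => (u i + v i) * kof a g i)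
            (fun _ _ => Nat.zero_le _) (Finset.mem_univ i)
        have h2 : u i + v i ≤ (u i + v i) * kof a g i := by
          have := kof_pos a g i
          calc u i + v i = (u i + v i) * 1 := by omega
          _ ≤ (u i + v i) * kof a g i := Nat.mul_le_mul_left _ this
        omega
      · have h1 : (u i + v i) * kof a g i ≤ ∑ i, (u i + v i) * kof a g i :=
          Finset.single_le_sum (f := fun i : Fin a => (u i + v i) * kof a g i)
            (fun _ _ => Nat.zero_le _) (Finset.mem_univ i)
        have h2 : u i ≤ (u i + v i) * kof a g i := by
          have := kof_pos a g i
          calc u i ≤ (u i + v i) * 1 := by omega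
          _ ≤ (u i + v i) * kof a g i := Nat.mul_le_mul_left _ this
        omega
    · rw [key_sum]
      omega
  · rintro ⟨k, s, u⟩ hp
    rw [Finset.mem_coe, F1, Finset.mem_filter] at hp
    try dsimp only at hp ⊢
    obtain ⟨-, hmono, hpos, hlt, -⟩ := hp
    have hk : ∀ i, kof a (gaps a k) i = k i := kof_gaps hmono hpos
    refine Prod.ext (funext fun i => hk i) (Prod.ext (funext fun i => ?_) rfl)
    have := hlt i
    try dsimp only
    omega
  · rintro ⟨g, u, v⟩ _
    try dsimp only
    refine Prod.ext (gaps_kof a g) (Prod.ext rfl (funext fun i => ?_))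
    try dsimp only
    omega

def mrep (a : ℕ) (c w : Fin a → ℕ) : Multiset ℕ := ∑ i : Fin a, Multiset.replicate (c i) (w i)

lemma mrep_sum (a : ℕ) (c w : Fin a → ℕ) : (mrep a c w).sum = ∑ i, c i * w i := by
  rw [mrep, Multiset.sum_sum]
  exact Finset.sum_congr rfl fun i _ => by rw [Multiset.sum_replicate, smul_eq_mul]

lemma mrep_pos {a : ℕ} {w : Fin a → ℕ} (hw : ∀ i, 0 < w i) (c : Fin a → ℕ) :
    ∀ p ∈ mrep a c w, 0 < p := by
  intro p hp
  rw [mrep, Multiset.mem_sum] at hp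
  obtain ⟨i, -, hi⟩ := hp
  rw [Multiset.eq_of_mem_replicate hi]
  exact hw i

lemma mrep_count {a : ℕ} {w : Fin a → ℕ} (hw : Function.Injective w) (c : Fin a → ℕ)
    (i0 : Fin a) : (mrep a c w).count (w i0) = c i0 := by
  rw [mrep, Multiset.count_sum']
  have h1 : ∀ i ∈ (univ : Finset (Fin a)),
      Multiset.count (w i0) (Multiset.replicate (c i) (w i)) = if i = i0 then c i else 0 := by
    intro i _
    rw [Multiset.count_replicate]
    by_cases h : i = i0
    · rw [if_pos h, if_pos (by rw [h])]
    · rw [if_neg h, if_neg (fun he => h (hw he))]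
  rw [Finset.sum_congr rfl h1, Finset.sum_ite_eq' univ i0 c]
  simp

lemma mrep_reconstruct {a : ℕ} {w : Fin a → ℕ} (hw : Function.Injective w)
    (hcover : ∀ p, 1 ≤ p → p ≤ a → ∃ i, w i = p) (M : Multiset ℕ)
    (hM : ∀ p ∈ M, 1 ≤ p ∧ p ≤ a) :
    mrep a (fun i => M.count (w i)) w = M := by
  classical
  have h1 : mrep a (fun i => M.count (w i)) w
      = ∑ v ∈ Finset.image w univ, M.count v • ({v} : Multiset ℕ) := by
    rw [Finset.sum_image (fun x _ y _ h => hw h), mrep]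
    exact Finset.sum_congr rfl fun i _ => (Multiset.nsmul_singleton _ _).symm
  have hsub : M.toFinset ⊆ Finset.image w univ := by
    intro v hv
    rw [Multiset.mem_toFinset] at hv
    obtain ⟨i, hi⟩ := hcover v (hM v hv).1 (hM v hv).2
    exact Finset.mem_image.2 ⟨i, Finset.mem_univ i, hi⟩
  have h2 : ∑ v ∈ Finset.image w univ, M.count v • ({v} : Multiset ℕ)
      = ∑ v ∈ M.toFinset, M.count v • ({v} : Multiset ℕ) := by
    refine (Finset.sum_subset hsub fun v _ hv => ?_).symm
    rw [Multiset.count_eq_zero.2 (fun h => hv (Multiset.mem_toFinset.2 h)), zero_smul]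
  rw [h1, h2, Multiset.toFinset_sum_count_nsmul_eq]

lemma count_le_sum {M : Multiset ℕ} {v : ℕ} (hv : 0 < v) : M.count v * v ≤ M.sum := by
  have h1 : Multiset.replicate (M.count v) v ≤ M := Multiset.le_count_iff_replicate_le.1 le_rfl
  obtain ⟨u, hu⟩ := Multiset.le_iff_exists_add.1 h1
  have hs : M.sum = Multiset.count v M * v + u.sum := by
    conv_lhs => rw [hu]
    rw [Multiset.sum_add, Multiset.sum_replicate, smul_eq_mul]
  omega

lemma ps_pos_elim {a : ℕ} {g : Fin a → ℕ} {t : ℕ} (h : 0 < ps a g t) :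
    ∃ r : Fin a, (r:ℕ) ≤ t ∧ 0 < g r := by
  obtain ⟨r, hr, hne⟩ := Finset.exists_ne_zero_of_sum_ne_zero (by omega : ps a g t ≠ 0)
  rw [Finset.mem_range] at hr
  rw [gv] at hne
  by_cases hra : r < a
  · rw [dif_pos hra] at hne
    have hc : ((⟨r, hra⟩ : Fin a) : ℕ) = r := rfl
    exact ⟨⟨r, hra⟩, by omega, by omega⟩
  · rw [dif_neg hra] at hne
    omega

def F3 (j : ℕ) : Finset ((x : ℕ × ℕ × ℕ) ×
    (Nat.Partition x.1 × Nat.Partition x.2.1 × Nat.Partition x.2.2)) :=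
  Finset.sigma ((Finset.range (j+1) ×ˢ Finset.range (j+1) ×ˢ Finset.range (j+1)).filter
      (fun x : ℕ × ℕ × ℕ => x.1 + x.2.1 + x.2.2 = j)) (fun _ => univ)

lemma F3_ext (b b' : (x : ℕ × ℕ × ℕ) ×
    (Nat.Partition x.1 × Nat.Partition x.2.1 × Nat.Partition x.2.2))
    (h1 : b.1 = b'.1) (h2 : b.2.1.parts = b'.2.1.parts)
    (h3 : b.2.2.1.parts = b'.2.2.1.parts) (h4 : b.2.2.2.parts = b'.2.2.2.parts) : b = b' := by
  obtain ⟨⟨x, y, z⟩, P, Q, R⟩ := b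
  obtain ⟨⟨x', y', z'⟩, P', Q', R'⟩ := b'
  try dsimp only at h1 h2 h3 h4
  injection h1 with hx hyz
  injection hyz with hy hz
  subst hx; subst hy; subst hz
  have hP : P = P' := Nat.Partition.ext h2
  have hQ : Q = Q' := Nat.Partition.ext h3
  have hR : R = R' := Nat.Partition.ext h4
  rw [hP, hQ, hR]

def fwd3 (a : ℕ) (q : (Fin a → ℕ) × (Fin a → ℕ) × (Fin a → ℕ)) :
    (x : ℕ × ℕ × ℕ) × (Nat.Partition x.1 × Nat.Partition x.2.1 × Nat.Partition x.2.2) :=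
  ⟨(∑ r, q.1 r * (a - (r:ℕ)), ∑ i, q.2.1 i * ((i:ℕ)+1), ∑ i, q.2.2 i * ((i:ℕ)+1)),
   (⟨mrep a q.1 (fun r => a - (r:ℕ)),
      fun {p} hp => mrep_pos (fun r => by have := r.isLt; omega) q.1 p hp,
      mrep_sum a q.1 _⟩,
    ⟨mrep a q.2.1 (fun i => (i:ℕ)+1),
      fun {p} hp => mrep_pos (fun i => by omega) q.2.1 p hp, mrep_sum a q.2.1 _⟩,
    ⟨mrep a q.2.2 (fun i => (i:ℕ)+1),
      fun {p} hp => mrep_pos (fun i => by omega) q.2.2 p hp, mrep_sum a q.2.2 _⟩)⟩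

def bwd3 (a : ℕ) (b : (x : ℕ × ℕ × ℕ) ×
    (Nat.Partition x.1 × Nat.Partition x.2.1 × Nat.Partition x.2.2)) :
    (Fin a → ℕ) × (Fin a → ℕ) × (Fin a → ℕ) :=
  (fun r => b.2.1.parts.count (a - (r:ℕ)), fun i => b.2.2.1.parts.count ((i:ℕ)+1),
   fun i => b.2.2.2.parts.count ((i:ℕ)+1))

lemma w1_inj (a : ℕ) : Function.Injective (fun r : Fin a => a - (r:ℕ)) := by
  intro r r' h
  simp only at h
  have := r.isLt
  have := r'.isLt
  exact Fin.ext (by omega)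

lemma w2_inj (a : ℕ) : Function.Injective (fun i : Fin a => (i:ℕ)+1) := by
  intro r r' h
  simp only at h
  exact Fin.ext (by omega)

lemma w1_cov (a : ℕ) : ∀ p, 1 ≤ p → p ≤ a → ∃ i : Fin a, (fun r : Fin a => a - (r:ℕ)) i = p := by
  intro p h1 h2
  refine ⟨⟨a - p, by omega⟩, ?_⟩
  have hc : ((⟨a - p, by omega⟩ : Fin a) : ℕ) = a - p := rfl
  simp only [hc]
  omega

lemma w2_cov (a : ℕ) : ∀ p, 1 ≤ p → p ≤ a → ∃ i : Fin a, (fun r : Fin a => (r:ℕ)+1) i = p := by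
  intro p h1 h2
  refine ⟨⟨p - 1, by omega⟩, ?_⟩
  have hc : ((⟨p - 1, by omega⟩ : Fin a) : ℕ) = p - 1 := rfl
  simp only [hc]
  omega

lemma parts_bound {n a : ℕ} (P : Nat.Partition n) (hna : n ≤ a) :
    ∀ p ∈ P.parts, 1 ≤ p ∧ p ≤ a := by
  intro p hp
  refine ⟨P.parts_pos hp, ?_⟩
  have := Multiset.single_le_sum (fun x _ => Nat.zero_le x) p hp
  rw [P.parts_sum] at this
  omega

lemma cardF2_eq_cardF3 (a j : ℕ) (ha : 0 < a) (hj : j ≤ a) :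
    (F2 a j).card = (F3 j).card := by
  classical
  apply Finset.card_nbij' (i := fwd3 a) (j := bwd3 a)
  · rintro ⟨g, u, v⟩ hq
    rw [Finset.mem_coe, F2, Finset.mem_filter] at hq
    obtain ⟨-, hC⟩ := hq
    try dsimp only at hC
    have hD : ∀ i ∈ (univ : Finset (Fin a)),
        (u i + v i) * kof a g i = u i * ((i:ℕ)+1) + v i * ((i:ℕ)+1) := by
      intro i _
      have hz : (u i + v i) * ps a g (i:ℕ) = 0 := by
        by_contra hzz
        have huv : 0 < u i + v i := by
          rcases Nat.eq_zero_or_pos (u i + v i) with h | h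
          · exact absurd (by rw [h, zero_mul]) hzz
          · exact h
        have hps : 0 < ps a g (i:ℕ) := by
          rcases Nat.eq_zero_or_pos (ps a g (i:ℕ)) with h | h
          · exact absurd (by rw [h, mul_zero]) hzz
          · exact h
        obtain ⟨r, hrle, hrpos⟩ := ps_pos_elim hps
        have hXr : g r * (a - (r:ℕ)) ≤ ∑ r : Fin a, g r * (a - (r:ℕ)) :=
          Finset.single_le_sum (f := fun r : Fin a => g r * (a - (r:ℕ)))
            (fun _ _ => Nat.zero_le _) (Finset.mem_univ r)
        have hYi : (u i + v i) * kof a g i ≤ ∑ i, (u i + v i) * kof a g i :=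
          Finset.single_le_sum (f := fun i : Fin a => (u i + v i) * kof a g i)
            (fun _ _ => Nat.zero_le _) (Finset.mem_univ i)
        have h5 : a - (r:ℕ) ≤ g r * (a - (r:ℕ)) := Nat.le_mul_of_pos_left _ hrpos
        have h6 : kof a g i ≤ (u i + v i) * kof a g i := Nat.le_mul_of_pos_left _ huv
        have h7 : kof a g i = (i:ℕ) + 1 + ps a g (i:ℕ) := rfl
        have h8 := i.isLt
        have h9 := r.isLt
        omega
      have e1 : (u i + v i) * kof a g i
          = (u i + v i) * ((i:ℕ)+1) + (u i + v i) * ps a g (i:ℕ) := by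
        rw [kof, Nat.mul_add]
      have e2 : (u i + v i) * ((i:ℕ)+1) = u i * ((i:ℕ)+1) + v i * ((i:ℕ)+1) :=
        Nat.add_mul _ _ _
      omega
    rw [Finset.sum_congr rfl hD, Finset.sum_add_distrib] at hC
    rw [Finset.mem_coe, F3, Finset.mem_sigma]
    refine ⟨?_, Finset.mem_univ _⟩
    rw [Finset.mem_filter, fwd3]
    try dsimp only
    simp only [Finset.mem_product, Finset.mem_range]
    omega
  · rintro ⟨xyz, P, Q, R⟩ hb
    rw [Finset.mem_coe, F3, Finset.mem_sigma, Finset.mem_filter] at hb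
    obtain ⟨hb1, -⟩ := hb
    simp only [Finset.mem_product, Finset.mem_range] at hb1
    obtain ⟨⟨hx, hy, hz⟩, hsum⟩ := hb1
    have hPb := parts_bound (a := a) P (by omega)
    have hQb := parts_bound (a := a) Q (by omega)
    have hRb := parts_bound (a := a) R (by omega)
    have hX : ∑ r : Fin a, P.parts.count (a - (r:ℕ)) * (a - (r:ℕ)) = xyz.1 := by
      have h := congrArg Multiset.sum (mrep_reconstruct (w1_inj a) (w1_cov a) P.parts hPb)
      rw [mrep_sum, P.parts_sum] at h
      exact h
    have hY : ∑ i : Fin a, Q.parts.count ((i:ℕ)+1) * ((i:ℕ)+1) = xyz.2.1 := by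
      have h := congrArg Multiset.sum (mrep_reconstruct (w2_inj a) (w2_cov a) Q.parts hQb)
      rw [mrep_sum, Q.parts_sum] at h
      exact h
    have hZ : ∑ i : Fin a, R.parts.count ((i:ℕ)+1) * ((i:ℕ)+1) = xyz.2.2 := by
      have h := congrArg Multiset.sum (mrep_reconstruct (w2_inj a) (w2_cov a) R.parts hRb)
      rw [mrep_sum, R.parts_sum] at h
      exact h
    rw [Finset.mem_coe, F2, Finset.mem_filter, bwd3]
    try dsimp only
    constructor
    · simp only [Finset.mem_product, Fintype.mem_piFinset, Finset.mem_range]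
      refine ⟨fun r => ?_, fun i => ?_, fun i => ?_⟩
      · have h1 : P.parts.count (a - (r:ℕ)) * (a - (r:ℕ)) ≤ P.parts.sum :=
          count_le_sum (by have := r.isLt; omega)
        rw [P.parts_sum] at h1
        have h2 : P.parts.count (a - (r:ℕ)) ≤ P.parts.count (a - (r:ℕ)) * (a - (r:ℕ)) :=
          Nat.le_mul_of_pos_right _ (by have := r.isLt; omega)
        omega
      · have h1 : Q.parts.count ((i:ℕ)+1) * ((i:ℕ)+1) ≤ Q.parts.sum :=
          count_le_sum (by omega)
        rw [Q.parts_sum] at h1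
        have h2 : Q.parts.count ((i:ℕ)+1) ≤ Q.parts.count ((i:ℕ)+1) * ((i:ℕ)+1) :=
          Nat.le_mul_of_pos_right _ (by omega)
        omega
      · have h1 : R.parts.count ((i:ℕ)+1) * ((i:ℕ)+1) ≤ R.parts.sum :=
          count_le_sum (by omega)
        rw [R.parts_sum] at h1
        have h2 : R.parts.count ((i:ℕ)+1) ≤ R.parts.count ((i:ℕ)+1) * ((i:ℕ)+1) :=
          Nat.le_mul_of_pos_right _ (by omega)
        omega
    · have hD : ∀ i ∈ (univ : Finset (Fin a)),
          (Q.parts.count ((i:ℕ)+1) + R.parts.count ((i:ℕ)+1))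
            * kof a (fun r => P.parts.count (a - (r:ℕ))) i
          = Q.parts.count ((i:ℕ)+1) * ((i:ℕ)+1) + R.parts.count ((i:ℕ)+1) * ((i:ℕ)+1) := by
        intro i _
        have hz : (Q.parts.count ((i:ℕ)+1) + R.parts.count ((i:ℕ)+1))
            * ps a (fun r => P.parts.count (a - (r:ℕ))) (i:ℕ) = 0 := by
          by_contra hzz
          have huv : 0 < Q.parts.count ((i:ℕ)+1) + R.parts.count ((i:ℕ)+1) := by
            rcases Nat.eq_zero_or_pos (Q.parts.count ((i:ℕ)+1) + R.parts.count ((i:ℕ)+1))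
              with h | h
            · exact absurd (by rw [h, zero_mul]) hzz
            · exact h
          have hps : 0 < ps a (fun r => P.parts.count (a - (r:ℕ))) (i:ℕ) := by
            rcases Nat.eq_zero_or_pos (ps a (fun r => P.parts.count (a - (r:ℕ))) (i:ℕ))
              with h | h
            · exact absurd (by rw [h, mul_zero]) hzz
            · exact h
          obtain ⟨r, hrle, hrpos⟩ := ps_pos_elim hps
          have hrmem : (a - (r:ℕ)) ∈ P.parts := Multiset.count_pos.1 hrpos
          have hrx : a - (r:ℕ) ≤ xyz.1 := by
            have := Multiset.single_le_sum (fun t _ => Nat.zero_le t) _ hrmem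
            rw [P.parts_sum] at this
            omega
          have hiy : (i:ℕ)+1 ≤ xyz.2.1 + xyz.2.2 := by
            rcases Nat.eq_zero_or_pos (Q.parts.count ((i:ℕ)+1)) with h | h
            · have h' : 0 < R.parts.count ((i:ℕ)+1) := by omega
              have hmem := Multiset.count_pos.1 h'
              have := Multiset.single_le_sum (fun t _ => Nat.zero_le t) _ hmem
              rw [R.parts_sum] at this
              omega
            · have hmem := Multiset.count_pos.1 h
              have := Multiset.single_le_sum (fun t _ => Nat.zero_le t) _ hmem
              rw [Q.parts_sum] at this
              omega
          have h8 := i.isLt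
          have h9 := r.isLt
          omega
        have e1 : (Q.parts.count ((i:ℕ)+1) + R.parts.count ((i:ℕ)+1))
            * kof a (fun r => P.parts.count (a - (r:ℕ))) i
            = (Q.parts.count ((i:ℕ)+1) + R.parts.count ((i:ℕ)+1)) * ((i:ℕ)+1)
              + (Q.parts.count ((i:ℕ)+1) + R.parts.count ((i:ℕ)+1))
                * ps a (fun r => P.parts.count (a - (r:ℕ))) (i:ℕ) := by
          rw [kof, Nat.mul_add]
        have e2 : (Q.parts.count ((i:ℕ)+1) + R.parts.count ((i:ℕ)+1)) * ((i:ℕ)+1)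
            = Q.parts.count ((i:ℕ)+1) * ((i:ℕ)+1) + R.parts.count ((i:ℕ)+1) * ((i:ℕ)+1) :=
          Nat.add_mul _ _ _
        omega
      rw [Finset.sum_congr rfl hD, Finset.sum_add_distrib, hX, hY, hZ]
      omega
  · rintro ⟨g, u, v⟩ _
    rw [bwd3, fwd3]
    try dsimp only
    refine Prod.ext (funext fun r => ?_) (Prod.ext (funext fun i => ?_) (funext fun i => ?_))
    · exact mrep_count (w1_inj a) g r
    · exact mrep_count (w2_inj a) u i
    · exact mrep_count (w2_inj a) v i
  · rintro ⟨xyz, P, Q, R⟩ hb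
    rw [Finset.mem_coe, F3, Finset.mem_sigma, Finset.mem_filter] at hb
    obtain ⟨hb1, -⟩ := hb
    simp only [Finset.mem_product, Finset.mem_range] at hb1
    obtain ⟨⟨hx, hy, hz⟩, hsum⟩ := hb1
    have hPb := parts_bound (a := a) P (by omega)
    have hQb := parts_bound (a := a) Q (by omega)
    have hRb := parts_bound (a := a) R (by omega)
    have hX : ∑ r : Fin a, P.parts.count (a - (r:ℕ)) * (a - (r:ℕ)) = xyz.1 := by
      have h := congrArg Multiset.sum (mrep_reconstruct (w1_inj a) (w1_cov a) P.parts hPb)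
      rw [mrep_sum, P.parts_sum] at h
      exact h
    have hY : ∑ i : Fin a, Q.parts.count ((i:ℕ)+1) * ((i:ℕ)+1) = xyz.2.1 := by
      have h := congrArg Multiset.sum (mrep_reconstruct (w2_inj a) (w2_cov a) Q.parts hQb)
      rw [mrep_sum, Q.parts_sum] at h
      exact h
    have hZ : ∑ i : Fin a, R.parts.count ((i:ℕ)+1) * ((i:ℕ)+1) = xyz.2.2 := by
      have h := congrArg Multiset.sum (mrep_reconstruct (w2_inj a) (w2_cov a) R.parts hRb)
      rw [mrep_sum, R.parts_sum] at h
      exact h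
    refine F3_ext _ _ ?_ ?_ ?_ ?_
    · rw [bwd3, fwd3]
      try dsimp only
      exact Prod.ext hX (Prod.ext hY hZ)
    · exact mrep_reconstruct (w1_inj a) (w1_cov a) P.parts hPb
    · exact mrep_reconstruct (w2_inj a) (w2_cov a) Q.parts hQb
    · exact mrep_reconstruct (w2_inj a) (w2_cov a) R.parts hRb

open Fin.NatCast in
lemma MO_eq_cardF1 (a n : ℕ) : MO a n = (F1 a n).card := by
  classical
  rw [MO]
  have hterm : ∀ f : Fin a → Fin (n+1) × Fin (n+1),
      ∏ i, ((f i).2 : ℕ) = (Fintype.piFinset fun i => range ((f i).2 : ℕ)).card := by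
    intro f; rw [Fintype.card_piFinset]; simp
  rw [Finset.sum_congr rfl fun f _ => hterm f, ← Finset.card_sigma]
  apply Finset.card_nbij'
    (i := fun q => (fun i => ((q.1 i).1 : ℕ), fun i => ((q.1 i).2 : ℕ), q.2))
    (j := fun p => ⟨fun i => ((p.1 i : Fin (n+1)), (p.2.1 i : Fin (n+1))), p.2.2⟩)
  · rintro ⟨f, u⟩ hq
    rw [Finset.mem_coe, Finset.mem_sigma, Finset.mem_filter] at hq
    obtain ⟨⟨-, hpos, hmono, hsum⟩, hu⟩ := hq
    rw [Fintype.mem_piFinset] at hu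
    simp only [Finset.mem_range] at hu
    rw [Finset.mem_coe, F1, Finset.mem_filter]
    refine ⟨?_, fun i j hij => ?_, fun i => (hpos i).1, fun i => hu i, hsum⟩
    · simp only [Finset.mem_product, Fintype.mem_piFinset, Finset.mem_range]
      exact ⟨fun i => (f i).1.isLt, fun i => (f i).2.isLt,
        fun i => (hu i).trans ((f i).2.isLt)⟩
    · exact hmono i j hij
  · rintro ⟨k, s, u⟩ hp
    rw [Finset.mem_coe, F1, Finset.mem_filter] at hp
    obtain ⟨hmem, hmono, hpos, hlt, hsum⟩ := hp
    simp only [Finset.mem_product, Fintype.mem_piFinset, Finset.mem_range] at hmem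
    obtain ⟨hk, hs, hu⟩ := hmem
    have hkc : ∀ i, ((k i : Fin (n+1)) : ℕ) = k i := fun i => Fin.val_cast_of_lt (hk i)
    have hsc : ∀ i, ((s i : Fin (n+1)) : ℕ) = s i := fun i => Fin.val_cast_of_lt (hs i)
    rw [Finset.mem_coe, Finset.mem_sigma, Finset.mem_filter]
    refine ⟨⟨Finset.mem_univ _, fun i => ⟨?_, ?_⟩, fun i j hij => ?_, ?_⟩, ?_⟩
    · simp only [hkc]; exact lt_of_lt_of_le Nat.zero_lt_one (hpos i)
    · simp only [hsc]; exact lt_of_le_of_lt (Nat.zero_le _) (hlt i)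
    · simp only [Fin.lt_def, hkc]; exact hmono hij
    · simp only [hkc, hsc]; exact hsum
    · rw [Fintype.mem_piFinset]
      intro i
      simp only [Finset.mem_range, hsc]
      exact hlt i
  · rintro ⟨f, u⟩ hq
    have hf : (fun i => ((((f i).1 : ℕ) : Fin (n+1)), (((f i).2 : ℕ) : Fin (n+1)))) = f := by
      funext i
      ext <;> simp [Fin.cast_val_eq_self]
    simp only [hf]
  · rintro ⟨k, s, u⟩ hp
    rw [Finset.mem_coe, F1, Finset.mem_filter] at hp
    obtain ⟨hmem, -⟩ := hp
    simp only [Finset.mem_product, Fintype.mem_piFinset, Finset.mem_range] at hmem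
    obtain ⟨hk, hs, -⟩ := hmem
    refine Prod.ext ?_ (Prod.ext ?_ rfl) <;> funext i
    · exact Fin.val_cast_of_lt (hk i)
    · exact Fin.val_cast_of_lt (hs i)

lemma c3_eq_cardF3 (j : ℕ) : c3 j = (F3 j).card := by
  rw [c3, F3, Finset.card_sigma]
  refine Finset.sum_congr rfl fun x _ => ?_
  rw [Finset.card_univ, Fintype.card_prod, Fintype.card_prod, mul_assoc]

lemma MO_zero (a n : ℕ) (hn : n < T a) : MO a n = 0 := by
  classical
  rw [MO]
  rw [Finset.filter_false_of_mem, Finset.sum_empty]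
  rintro f - ⟨hpos, hmono, hsum⟩
  have hmono' : StrictMono (fun i => ((f i).1 : ℕ)) := by
    intro i i' hii
    exact hmono i i' hii
  have hk := strictMono_bound hmono' (fun i => (hpos i).1)
  have hle : ∀ i ∈ (univ : Finset (Fin a)), (i:ℕ) + 1 ≤ ((f i).2 : ℕ) * ((f i).1 : ℕ) := by
    intro i _
    have h1 := hk i
    have h2 : ((f i).1 : ℕ) ≤ ((f i).2 : ℕ) * ((f i).1 : ℕ) :=
      Nat.le_mul_of_pos_left _ (hpos i).2
    omega
  have h3 := Finset.sum_le_sum hle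
  rw [hsum] at h3
  rw [Fin.sum_univ_eq_sum_range (fun i => i + 1) a] at h3
  rw [T] at hn
  omega

/-- for a positive integer `a`, `MO (a; n) = 0` for all `n < a(a+1)/2`,
and `MO (a; a(a+1)/2 + j) = c3 j` for all `0 ≤ j ≤ a`. -/
theorem MO_initial_coefficients (a : ℕ) (ha : 0 < a) :
    (∀ n : ℕ, n < a * (a + 1) / 2 → MO a n = 0) ∧
    (∀ j : ℕ, j ≤ a → MO a (a * (a + 1) / 2 + j) = c3 j) := by
  have hT : a * (a + 1) / 2 = T a := by rw [T, gauss]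
  constructor
  · intro n hn
    exact MO_zero a n (by omega)
  · intro j hj
    rw [hT, MO_eq_cardF1, cardF1_eq_cardF2 a j ha, cardF2_eq_cardF3 a j ha hj, ← c3_eq_cardF3]
end

section
/- If a is a positive integer and n is an integer with a ≤ n ≤ 2a, then M(a;n) = binom(a+n−1, n−a) + binom(a+n−2, n−a−1), with the convention that a binomial coefficient with negative lower index is 0 (so M(a;a) = 1). -/
open Finset

/-- `M a n` is the coefficient of Amdeberhan-Andrews-Tauraso: the sum of the products
`s_1 ⋯ s_a` over all weakly increasing tuples `1 ≤ k_1 ≤ ⋯ ≤ k_a` of positive integers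
and positive integers `s_1, …, s_a` with `s_1*k_1 + ⋯ + s_a*k_a = n`;
in particular `M a 0 = 0` for `a ≥ 1`. -/
def M (a n : ℕ) : ℕ :=
  ∑ f ∈ Finset.univ.filter (fun f : Fin a → Fin (n + 1) × Fin (n + 1) =>
      (∀ i, 0 < ((f i).1 : ℕ) ∧ 0 < ((f i).2 : ℕ)) ∧
      (∀ i j : Fin a, i ≤ j → (f i).1 ≤ (f j).1) ∧
      (∑ i, ((f i).2 : ℕ) * ((f i).1 : ℕ)) = n),
    ∏ i, ((f i).2 : ℕ)

open PowerSeries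

namespace AAT
set_option maxHeartbeats 1000000

noncomputable section

def U (k : ℕ) : ℚ⟦X⟧ := PowerSeries.mk fun j => if k ∣ j then ((j / k : ℕ) : ℚ) else 0

def D (k : ℕ) : ℚ⟦X⟧ := (1 - X ^ k)⁻¹

lemma constCoeff_one_sub_X_pow (k : ℕ) (hk : 1 ≤ k) :
    constantCoeff (1 - X ^ k : ℚ⟦X⟧) = 1 := by
  simp [map_sub]; omega

lemma hD (k : ℕ) (hk : 1 ≤ k) : (1 - X ^ k) * D k = 1 := by
  apply PowerSeries.mul_inv_cancel
  rw [constCoeff_one_sub_X_pow k hk]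
  norm_num

/-- intermediate: U k * (1 - X^k) = indicator of positive multiples of k -/
lemma U_mul_one_sub (k : ℕ) (hk : 1 ≤ k) :
    U k * (1 - X ^ k) = PowerSeries.mk fun j => if k ∣ j ∧ j ≠ 0 then (1 : ℚ) else 0 := by
  ext j
  rw [mul_sub, mul_one, map_sub, coeff_mul_X_pow']
  simp only [U, coeff_mk]
  by_cases hdvd : k ∣ j
  · rcases Nat.eq_zero_or_pos j with rfl | hj
    · simp
    · have hkj : k ≤ j := Nat.le_of_dvd hj hdvd
      have hdvd' : k ∣ j - k := (Nat.dvd_sub hdvd dvd_rfl)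
      rw [if_pos hdvd, if_pos hkj, if_pos hdvd', if_pos ⟨hdvd, by omega⟩]
      have : (j - k) / k = j / k - 1 := by
        rcases hdvd with ⟨c, rfl⟩
        have hc1 : k * c - k = k * (c - 1) := by
          rcases c with _ | c'
          · simp
          · simp [Nat.mul_succ]
        rw [hc1, Nat.mul_div_cancel_left _ (by omega), Nat.mul_div_cancel_left _ (by omega)]
      rw [this]
      have h1 : 1 ≤ j / k := by
        rw [Nat.le_div_iff_mul_le (by omega)]; omega
      push_cast [Nat.cast_sub h1]
      ring
  · have h2 : ¬ (k ∣ j ∧ j ≠ 0) := by tauto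
    rw [if_neg hdvd, if_neg h2]
    by_cases hkj : k ≤ j
    · have : ¬ k ∣ (j - k) := by
        intro hc
        exact hdvd (by have := Nat.dvd_add hc (dvd_refl k); rwa [Nat.sub_add_cancel hkj] at this)
      rw [if_pos hkj, if_neg this]; ring
    · rw [if_neg hkj]; ring

lemma U_mul (k : ℕ) (hk : 1 ≤ k) : U k * (1 - X ^ k) ^ 2 = X ^ k := by
  rw [pow_two, ← mul_assoc, U_mul_one_sub k hk]
  ext j
  rw [mul_sub, mul_one, map_sub, coeff_mul_X_pow']
  simp only [coeff_mk, coeff_X_pow]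
  by_cases hdvd : k ∣ j
  · rcases Nat.eq_zero_or_pos j with rfl | hj
    · simp [show ¬(0 = k) by omega]
    · have hkj : k ≤ j := Nat.le_of_dvd hj hdvd
      have hdvd' : k ∣ j - k := (Nat.dvd_sub hdvd dvd_rfl)
      rw [if_pos ⟨hdvd, by omega⟩, if_pos hkj]
      by_cases hjk : j = k
      · rw [if_neg (by simp [hjk]), if_pos hjk]; simp
      · rw [if_pos ⟨hdvd', by omega⟩, if_neg hjk]
        norm_num
  · have h2 : ¬ (k ∣ j ∧ j ≠ 0) := by tauto
    have hjk : j ≠ k := by rintro rfl; exact hdvd dvd_rfl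
    rw [if_neg h2, if_neg hjk]
    by_cases hkj : k ≤ j
    · have : ¬ (k ∣ (j - k) ∧ j - k ≠ 0) := by
        rintro ⟨hc, hne⟩
        exact hdvd (by have := Nat.dvd_add hc (dvd_refl k); rwa [Nat.sub_add_cancel hkj] at this)
      rw [if_pos hkj, if_neg this]; ring
    · rw [if_neg hkj]; ring


lemma U_eq (k : ℕ) (hk : 1 ≤ k) : U k = X ^ k * D k ^ 2 := by
  have h1 : U k = U k * ((1 - X ^ k) * D k) ^ 2 := by rw [hD k hk]; ring
  calc U k = U k * ((1 - X ^ k) * D k) ^ 2 := h1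
    _ = (U k * (1 - X ^ k) ^ 2) * D k ^ 2 := by ring
    _ = X ^ k * D k ^ 2 := by rw [U_mul k hk]

/-- `w k = X^{k-1}(1-X)^2/(1-X^k)^2`. -/
def w (k : ℕ) : ℚ⟦X⟧ := X ^ (k - 1) * (1 - X) ^ 2 * D k ^ 2

lemma w_one : w 1 = 1 := by
  have h := hD 1 le_rfl
  rw [pow_one] at h
  have : (1 - X) ^ 2 * D 1 ^ 2 = ((1 - X) * D 1) ^ 2 := by ring
  rw [w]; simp only [Nat.sub_self, pow_zero, one_mul]
  rw [this, h, one_pow]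

lemma U_w (k : ℕ) (hk : 1 ≤ k) : (1 - X) ^ 2 * U k = X * w k := by
  rw [U_eq k hk, w]
  have : (X : ℚ⟦X⟧) * X ^ (k - 1) = X ^ k := by
    rw [← pow_succ']
    congr 1
    omega
  calc (1 - X) ^ 2 * (X ^ k * D k ^ 2) = X ^ k * ((1 - X) ^ 2 * D k ^ 2) := by ring
    _ = (X * X ^ (k - 1)) * ((1 - X) ^ 2 * D k ^ 2) := by rw [this]
    _ = X * (X ^ (k - 1) * (1 - X) ^ 2 * D k ^ 2) := by ring

lemma key_poly (k : ℕ) (hk : 2 ≤ k) :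
    X ^ (k - 1) * (1 - X) ^ 2 + (1 - X ^ (k - 1)) * (1 - X ^ (k + 1)) 
      = ((1 : ℚ⟦X⟧) - X ^ k) ^ 2 := by
  obtain ⟨j, rfl⟩ : ∃ j, k = j + 1 := ⟨k - 1, by omega⟩
  have e1 : j + 1 - 1 = j := by omega
  have e2 : (X : ℚ⟦X⟧) ^ (j + 1) = X ^ j * X := by rw [pow_succ]
  have e3 : (X : ℚ⟦X⟧) ^ (j + 1 + 1) = X ^ j * X * X := by rw [pow_succ, pow_succ]
  rw [e1, e2, e3]
  ring

lemma key2 (k : ℕ) (hk : 2 ≤ k) :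
    w k * (1 - X ^ k) + (1 - X ^ (k - 1)) * (1 - X ^ (k + 1)) * D k = 1 - X ^ k := by
  have hk1 : 1 ≤ k := by omega
  have hcancel : ∀ f g : ℚ⟦X⟧, f * (1 - X ^ k) = g * (1 - X ^ k) → f = g := by
    intro f g h
    have h2 := congrArg (· * D k) h
    rw [mul_assoc, mul_assoc, hD k hk1, mul_one, mul_one] at h2
    exact h2
  apply hcancel
  have hw : w k * (1 - X ^ k) ^ 2 = X ^ (k - 1) * (1 - X) ^ 2 := by
    rw [w]
    calc X ^ (k - 1) * (1 - X) ^ 2 * D k ^ 2 * (1 - X ^ k) ^ 2 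
        = X ^ (k - 1) * (1 - X) ^ 2 * ((1 - X ^ k) * D k) ^ 2 := by ring
      _ = X ^ (k - 1) * (1 - X) ^ 2 := by rw [hD k hk1]; ring
  calc (w k * (1 - X ^ k) + (1 - X ^ (k - 1)) * (1 - X ^ (k + 1)) * D k) * (1 - X ^ k)
      = w k * (1 - X ^ k) ^ 2 + (1 - X ^ (k - 1)) * (1 - X ^ (k + 1)) * (D k * (1 - X ^ k)) := by
        ring
    _ = X ^ (k - 1) * (1 - X) ^ 2 + (1 - X ^ (k - 1)) * (1 - X ^ (k + 1)) := by
        rw [hw, mul_comm (D k), hD k hk1, mul_one]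
    _ = (1 - X ^ k) ^ 2 := key_poly k hk
    _ = (1 - X ^ k) * (1 - X ^ k) := by ring

lemma X_dvd_w (k : ℕ) : X ^ (k - 1) ∣ w k := ⟨(1 - X) ^ 2 * D k ^ 2, by rw [w, mul_assoc]⟩


/-- monotone tuples with values in `[K, N]`. -/
def monoset (b K N : ℕ) : Finset (Fin b → ℕ) :=
  (Fintype.piFinset fun _ => Finset.Icc K N).filter (fun k => ∀ i j, i ≤ j → k i ≤ k j)

lemma mem_monoset {b K N : ℕ} {k : Fin b → ℕ} :
    k ∈ monoset b K N ↔ (∀ i, k i ∈ Finset.Icc K N) ∧ ∀ i j, i ≤ j → k i ≤ k j := by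
  simp [monoset, Fintype.mem_piFinset]

def T (b K N : ℕ) : ℚ⟦X⟧ := ∑ k ∈ monoset b K N, ∏ i, w (k i)

def S (c K N : ℕ) : ℚ⟦X⟧ := ∑ b ∈ range (c + 1), T b K N

lemma T_zero (K N : ℕ) : T 0 K N = 1 := by
  rw [T]
  rw [show monoset 0 K N = {(fun i => Fin.elim0 i)} from by
    apply Finset.eq_singleton_iff_unique_mem.2
    constructor
    · rw [mem_monoset]
      exact ⟨fun i => i.elim0, fun i => i.elim0⟩
    · intro x _
      funext i
      exact i.elim0]
  rw [Finset.sum_singleton]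
  exact Finset.prod_of_isEmpty _

lemma T_empty (b K N : ℕ) (hb : 1 ≤ b) (h : N < K) : T b K N = 0 := by
  rw [T]
  convert Finset.sum_empty
  rw [Finset.eq_empty_iff_forall_notMem]
  intro k hk
  rcases mem_monoset.1 hk with ⟨hmem, -⟩
  have := hmem ⟨0, by omega⟩
  rw [Finset.mem_Icc] at this
  omega

lemma S_zero (K N : ℕ) : S 0 K N = 1 := by
  rw [S, Finset.sum_range_one, T_zero]

lemma S_top (c N : ℕ) (hN : 1 ≤ N) : S c (N + 1) N = 1 := by
  rw [S]
  rw [Finset.sum_eq_single_of_mem 0 (Finset.mem_range.2 (by omega))]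
  · exact T_zero _ _
  · intro b _ hb
    exact T_empty b (N + 1) N (by omega) (by omega)

lemma T_succ (b K N : ℕ) (hKN : K ≤ N) :
    T (b + 1) K N = w K * T b K N + T (b + 1) (K + 1) N := by
  classical
  rw [T, ← Finset.sum_filter_add_sum_filter_not (monoset (b+1) K N) (fun k => k 0 = K)]
  congr 1
  · -- tuples with first entry K ↔ monoset b K N via tail/cons
    rw [T, Finset.mul_sum]
    apply Finset.sum_nbij' (fun k => Fin.tail k) (fun k => Fin.cons K k)
    · intro k hk
      simp only [Finset.mem_filter] at hk
      rcases hk with ⟨hk, hk0⟩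
      rcases mem_monoset.1 hk with ⟨hmem, hmono⟩
      rw [mem_monoset]
      refine ⟨fun i => hmem i.succ, fun i j hij => hmono i.succ j.succ (by simpa using hij)⟩
    · intro k hk
      rcases mem_monoset.1 hk with ⟨hmem, hmono⟩
      simp only [Finset.mem_filter]
      refine ⟨mem_monoset.2 ⟨?_, ?_⟩, Fin.cons_zero _ _⟩
      · intro i
        rcases Fin.eq_zero_or_eq_succ i with rfl | ⟨j, rfl⟩
        · simpa using Finset.mem_Icc.2 ⟨le_rfl, hKN⟩
        · simpa using hmem j
      · intro i j hij
        rcases Fin.eq_zero_or_eq_succ i with rfl | ⟨i', rfl⟩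
        · rcases Fin.eq_zero_or_eq_succ j with rfl | ⟨j', rfl⟩
          · exact le_rfl
          · simp only [Fin.cons_zero, Fin.cons_succ]
            exact (Finset.mem_Icc.1 (hmem j')).1
        · rcases Fin.eq_zero_or_eq_succ j with rfl | ⟨j', rfl⟩
          · exact absurd hij (by simp [Fin.lt_iff_val_lt_val, Fin.le_def])
          · simp only [Fin.cons_succ]
            exact hmono i' j' (by 
              rwa [Fin.succ_le_succ_iff] at hij)
    · intro k hk
      simp only [Finset.mem_filter] at hk
      rw [← hk.2]
      exact Fin.cons_self_tail k
    · intro k hk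
      funext i
      simp [Fin.tail]
    · intro k hk
      simp only [Finset.mem_filter] at hk
      rw [Fin.prod_univ_succ, hk.2]
      rfl
  · -- tuples with first entry > K
    rw [T]
    apply Finset.sum_congr _ (fun _ _ => rfl)
    ext k
    simp only [Finset.mem_filter, mem_monoset]
    constructor
    · rintro ⟨⟨hmem, hmono⟩, hne⟩
      refine ⟨fun i => ?_, hmono⟩
      rw [Finset.mem_Icc]
      have h0 := (Finset.mem_Icc.1 (hmem 0))
      have hi := (Finset.mem_Icc.1 (hmem i))
      have := hmono 0 i (Fin.zero_le i)
      omega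
    · rintro ⟨hmem, hmono⟩
      have h0 := Finset.mem_Icc.1 (hmem 0)
      refine ⟨⟨fun i => ?_, hmono⟩, by omega⟩
      have hi := Finset.mem_Icc.1 (hmem i)
      rw [Finset.mem_Icc]
      omega

lemma S_succ (c K N : ℕ) (hKN : K ≤ N) :
    S (c + 1) K N = w K * S c K N + S (c + 1) (K + 1) N := by
  have h1 : S (c+1) K N = (∑ b ∈ range (c+1), T (b+1) K N) + T 0 K N := by
    rw [S, Finset.sum_range_succ']
  have h2 : S (c+1) (K+1) N = (∑ b ∈ range (c+1), T (b+1) (K+1) N) + T 0 (K+1) N := by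
    rw [S, Finset.sum_range_succ']
  rw [h1, h2, T_zero, T_zero]
  rw [Finset.sum_congr rfl (fun b _ => T_succ b K N hKN)]
  rw [Finset.sum_add_distrib, ← Finset.mul_sum, ← S]
  ring


lemma main_dvd (N p : ℕ) : ∀ c K, c * (N + 2) + (N + 1 - K) ≤ p → 2 ≤ K → K ≤ N + 1 →
    (X : ℚ⟦X⟧) ^ (min (c * (K - 1)) (N - 1) + 1) ∣
      ((1 - X ^ (K - 1)) * S c K N - (1 - X ^ K)) := by
  induction p using Nat.strong_induction_on with
  | _ p IH =>
  intro c K hm hK2 hKN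
  rcases Nat.eq_or_lt_of_le hKN with hKtop | hKN'
  · -- K = N + 1
    subst hKtop
    have hN : 1 ≤ N := by omega
    rw [S_top c N hN, mul_one]
    have he : min (c * ((N + 1) - 1)) (N - 1) + 1 ≤ N := by
      rcases Nat.eq_zero_or_pos c with rfl | hc
      · simp; omega
      · have : N ≤ c * ((N + 1) - 1) := by
          simp only [Nat.add_sub_cancel]
          exact Nat.le_mul_of_pos_left N hc
        omega
    have heq : (1 - X ^ ((N + 1) - 1)) - (1 - X ^ (N + 1) : ℚ⟦X⟧) 
        = X ^ N * X - X ^ N := by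
      rw [Nat.add_sub_cancel, pow_succ]
      ring
    rw [heq]
    exact dvd_sub ((pow_dvd_pow X he).trans ⟨X, rfl⟩) (pow_dvd_pow X he)
  · -- K ≤ N
    have hKN'' : K ≤ N := by omega
    rcases c with _ | c'
    · rw [S_zero, mul_one]
      have hK1 : K - 1 + 1 = K := by omega
      have heq : (1 - X ^ (K - 1)) - (1 - X ^ K : ℚ⟦X⟧) 
          = X ^ (K - 1) * X - X ^ (K - 1) := by
        calc (1 - X ^ (K - 1)) - (1 - X ^ K : ℚ⟦X⟧) = X ^ K - X ^ (K - 1) := by ring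
          _ = X ^ (K - 1) * X - X ^ (K - 1) := by rw [← pow_succ, hK1]
      rw [heq]
      simp only [Nat.zero_mul, Nat.zero_min, Nat.zero_add, pow_one]
      exact dvd_sub ⟨X ^ (K - 1), mul_comm _ _⟩ (dvd_pow_self X (n := K - 1) (Nat.sub_ne_zero_of_lt (by omega)))
    · -- inductive step
      have hd : (1 - X ^ K) * D K = 1 := hD K (by omega)
      have hk2 := key2 K hK2
      set A := S c' K N with hA
      set B := S (c' + 1) (K + 1) N with hB
      have hsucc1 : (c' + 1) * (N + 2) = c' * (N + 2) + (N + 2) := Nat.succ_mul _ _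
      rw [hsucc1] at hm
      have d1 : (X : ℚ⟦X⟧) ^ (min (c' * (K - 1)) (N - 1) + 1) ∣
          ((1 - X ^ (K - 1)) * A - (1 - X ^ K)) := by
        apply IH (c' * (N + 2) + (N + 1 - K)) (by omega) c' K le_rfl hK2 hKN
      have d2 : (X : ℚ⟦X⟧) ^ (min ((c' + 1) * K) (N - 1) + 1) ∣
          ((1 - X ^ ((K + 1) - 1)) * B - (1 - X ^ (K + 1))) := by
        have := IH ((c' + 1) * (N + 2) + (N + 1 - (K + 1))) (by rw [hsucc1]; omega) (c' + 1) (K + 1)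
          le_rfl (by omega) (by omega)
        simpa using this
      rw [Nat.add_sub_cancel] at d2
      have hiden : (1 - X ^ (K - 1)) * S (c' + 1) K N - (1 - X ^ K)
          = w K * ((1 - X ^ (K - 1)) * A - (1 - X ^ K))
            + ((1 - X ^ (K - 1)) * D K) * ((1 - X ^ K) * B - (1 - X ^ (K + 1))) := by
        rw [S_succ c' K N hKN'', ← hA, ← hB]
        linear_combination (-(1 - X ^ (K - 1)) * B) * hd + hk2
      rw [hiden]
      apply dvd_add
      · -- first summand
        have hw : w K * ((1 - X ^ (K - 1)) * A - (1 - X ^ K))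
            = X ^ (K - 1) * (((1 - X) ^ 2 * D K ^ 2) * ((1 - X ^ (K - 1)) * A - (1 - X ^ K))) := by
          rw [w]; ring
        rw [hw]
        have : (X : ℚ⟦X⟧) ^ (min ((c' + 1) * (K - 1)) (N - 1) + 1) ∣
            X ^ ((K - 1) + (min (c' * (K - 1)) (N - 1) + 1)) := by
          apply pow_dvd_pow
          have hmul : (c' + 1) * (K - 1) = c' * (K - 1) + (K - 1) := Nat.succ_mul _ _
          omega
        refine this.trans ?_
        rw [pow_add]
        exact mul_dvd_mul dvd_rfl (d1.mul_left _)
      · have hle : min ((c' + 1) * (K - 1)) (N - 1) + 1 ≤ min ((c' + 1) * K) (N - 1) + 1 := by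
          have hmul : (c' + 1) * (K - 1) ≤ (c' + 1) * K := Nat.mul_le_mul_left _ (by omega)
          omega
        exact ((pow_dvd_pow X hle).trans d2).mul_left _


lemma T_one (a N : ℕ) (hN : 1 ≤ N) : T a 1 N = S a 2 N := by
  induction a with
  | zero => rw [T_zero, S_zero]
  | succ a ih =>
    rw [T_succ a 1 N hN, w_one, one_mul, ih, show (1+1:ℕ) = 2 from rfl]
    simp only [S, Finset.sum_range_succ]

/-- the key divisibility: for `a ≤ n ≤ 2a`,
`X^(n-a+1) ∣ (1-X) * T a 1 n - (1 - X^2)`. -/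
lemma T_dvd (a n : ℕ) (ha : 1 ≤ a) (h1 : a ≤ n) (h2 : n ≤ 2 * a) :
    (X : ℚ⟦X⟧) ^ (n - a + 1) ∣ ((1 - X) * T a 1 n - (1 - X ^ 2)) := by
  have hn : 1 ≤ n := le_trans ha h1
  have h := main_dvd n (a * (n + 2) + (n + 1 - 2)) a 2 le_rfl le_rfl (by omega)
  norm_num at h
  rw [← T_one a n hn] at h
  have hle : n - a + 1 ≤ min a (n - 1) + 1 := by omega
  exact (pow_dvd_pow X hle).trans h


lemma A_eq (a n : ℕ) :
    (1 - X) ^ (2 * a) * (∑ k ∈ monoset a 1 n, ∏ i, U (k i)) 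
      = X ^ a * T a 1 n := by
  rw [T, Finset.mul_sum, Finset.mul_sum]
  apply Finset.sum_congr rfl
  intro k hk
  rcases mem_monoset.1 hk with ⟨hmem, -⟩
  have h1 : ∀ i, 1 ≤ k i := fun i => (Finset.mem_Icc.1 (hmem i)).1
  calc (1 - X) ^ (2 * a) * ∏ i, U (k i) 
      = ∏ i : Fin a, ((1 - X) ^ 2 * U (k i)) := by
        rw [Finset.prod_mul_distrib, Finset.prod_const, Finset.card_univ, Fintype.card_fin, 
          ← pow_mul]
    _ = ∏ i : Fin a, (X * w (k i)) := Finset.prod_congr rfl fun i _ => U_w (k i) (h1 i)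
    _ = X ^ a * ∏ i, w (k i) := by
        rw [Finset.prod_mul_distrib, Finset.prod_const, Finset.card_univ, Fintype.card_fin]

lemma coeff_A (a n : ℕ) (ha : 1 ≤ a) (h1 : a ≤ n) (h2 : n ≤ 2 * a) :
    (coeff n) (∑ k ∈ monoset a 1 n, ∏ i, U (k i)) 
      = (Nat.choose (a + n - 1) (n - a) : ℚ) 
        + (if a < n then (Nat.choose (a + n - 2) (n - a - 1) : ℚ) else 0) := by
  have hn : 1 ≤ n := le_trans ha h1
  set A := ∑ k ∈ monoset a 1 n, ∏ i, U (k i) with hA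
  set V := (invOneSubPow ℚ (2 * a)).val with hV
  set G := X ^ a * ((1 + X) * V) with hG
  have hVinv : (1 - X : ℚ⟦X⟧) ^ (2 * a) * V = 1 := by
    rw [hV, ← invOneSubPow_inv_eq_one_sub_pow]
    exact (invOneSubPow ℚ (2 * a)).inv_val
  have hmulG : (1 - X : ℚ⟦X⟧) ^ (2 * a + 1) * G = X ^ a * (1 - X ^ 2) := by
    calc (1 - X : ℚ⟦X⟧) ^ (2 * a + 1) * G 
        = (X ^ a * ((1 + X) * (1 - X))) * ((1 - X) ^ (2 * a) * V) := by rw [hG]; ring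
      _ = X ^ a * ((1 + X) * (1 - X)) := by rw [hVinv, mul_one]
      _ = X ^ a * (1 - X ^ 2) := by ring
  have hmulA : (1 - X : ℚ⟦X⟧) ^ (2 * a + 1) * A = X ^ a * ((1 - X) * T a 1 n) := by
    calc (1 - X : ℚ⟦X⟧) ^ (2 * a + 1) * A = (1 - X) * ((1 - X) ^ (2 * a) * A) := by ring
      _ = (1 - X) * (X ^ a * T a 1 n) := by rw [A_eq a n]
      _ = X ^ a * ((1 - X) * T a 1 n) := by ring
  have hdvd : (X : ℚ⟦X⟧) ^ (n + 1) ∣ (1 - X) ^ (2 * a + 1) * (A - G) := by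
    have h3 : (1 - X : ℚ⟦X⟧) ^ (2 * a + 1) * (A - G) 
        = X ^ a * ((1 - X) * T a 1 n - (1 - X ^ 2)) := by
      rw [mul_sub, hmulA, hmulG, ← mul_sub]
    rw [h3]
    have hh := mul_dvd_mul (dvd_refl ((X : ℚ⟦X⟧) ^ a)) (T_dvd a n ha h1 h2)
    rw [← pow_add] at hh
    have he : a + (n - a + 1) = n + 1 := by omega
    rwa [he] at hh
  have hdvd2 : (X : ℚ⟦X⟧) ^ (n + 1) ∣ (A - G) := by
    have hu : IsUnit ((1 - X : ℚ⟦X⟧) ^ (2 * a + 1)) := by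
      apply IsUnit.pow
      rw [PowerSeries.isUnit_iff_constantCoeff]
      simp [map_sub]
    obtain ⟨u, hu⟩ := hu
    have heq : A - G = (↑u⁻¹ : ℚ⟦X⟧) * ((1 - X) ^ (2 * a + 1) * (A - G)) := by
      rw [← hu, ← mul_assoc, Units.inv_mul, one_mul]
    rw [heq]
    exact Dvd.dvd.mul_left hdvd _
  have hco : (coeff n) A = (coeff n) G := by
    have h0 := (PowerSeries.X_pow_dvd_iff.mp hdvd2) n (by omega)
    rw [map_sub] at h0
    exact sub_eq_zero.mp h0
  rw [hco, hG, PowerSeries.coeff_X_pow_mul', if_pos h1]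
  have hVco : ∀ j, (coeff j) V = (Nat.choose (2 * a - 1 + j) (2 * a - 1) : ℚ) := by
    intro j
    rw [hV, invOneSubPow_val_eq_mk_sub_one_add_choose_of_pos ℚ (2 * a) (by omega), coeff_mk]
  rw [add_mul, one_mul, map_add, hVco]
  have hb1 : Nat.choose (2 * a - 1 + (n - a)) (2 * a - 1) = Nat.choose (a + n - 1) (n - a) := by
    have he : 2 * a - 1 + (n - a) = a + n - 1 := by omega
    rw [he]
    have := Nat.choose_symm (n := a + n - 1) (k := 2 * a - 1) (by omega)
    have he2 : a + n - 1 - (2 * a - 1) = n - a := by omega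
    rw [he2] at this
    exact this.symm
  rw [hb1]
  congr 1
  by_cases hlt : a < n
  · rw [if_pos hlt]
    obtain ⟨m, hm⟩ : ∃ m, n - a = m + 1 := ⟨n - a - 1, by omega⟩
    rw [hm, coeff_succ_X_mul, hVco]
    have he : 2 * a - 1 + m = a + n - 2 := by omega
    rw [he]
    have := Nat.choose_symm (n := a + n - 2) (k := 2 * a - 1) (by omega)
    have he2 : a + n - 2 - (2 * a - 1) = n - a - 1 := by omega
    rw [he2] at this
    rw [← this]
    have he3 : m + 1 - 1 = n - a - 1 := by omega
    rw [he3]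
  · rw [if_neg hlt]
    have he : n - a = 0 := by omega
    rw [he, coeff_zero_X_mul]


/-- the finset of `s`-tuples for a given `k`-tuple. -/
def sset (a n : ℕ) (k : Fin a → ℕ) : Finset (Fin a → ℕ) :=
  (Fintype.piFinset fun _ => Finset.Icc 1 n).filter (fun s => ∑ i, s i * k i = n)

lemma mem_sset {a n : ℕ} {k s : Fin a → ℕ} :
    s ∈ sset a n k ↔ (∀ i, s i ∈ Finset.Icc 1 n) ∧ ∑ i, s i * k i = n := by
  simp [sset, Fintype.mem_piFinset]

lemma coeff_prod_U (a n : ℕ) (hn : 1 ≤ n) (k : Fin a → ℕ) (hk : ∀ i, 1 ≤ k i) :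
    (coeff n) (∏ i, U (k i)) = ∑ s ∈ sset a n k, ∏ i, (s i : ℚ) := by
  rw [PowerSeries.coeff_prod]
  apply Finset.sum_bij_ne_zero (fun l _ _ => fun i => l i / k i)
  · -- membership
    intro l hl hne
    rw [Finset.mem_finsuppAntidiag] at hl
    have hfac : ∀ i, k i ∣ l i ∧ 1 ≤ l i / k i := by
      intro i
      have := Finset.prod_ne_zero_iff.mp hne i (Finset.mem_univ i)
      simp only [U, coeff_mk] at this
      by_cases hdvd : k i ∣ l i
      · refine ⟨hdvd, ?_⟩
        rw [if_pos hdvd] at this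
        have h9 : l i / k i ≠ 0 := by
          intro h0; rw [h0] at this; simp at this
        exact Nat.one_le_iff_ne_zero.mpr h9
      · rw [if_neg hdvd] at this; simp at this
    rw [mem_sset]
    constructor
    · intro i
      rw [Finset.mem_Icc]
      refine ⟨(hfac i).2, ?_⟩
      have hle : l i ≤ n := by
        rw [← hl.1]
        exact Finset.single_le_sum (f := fun j => l j) (fun j _ => Nat.zero_le _) 
          (Finset.mem_univ i)
      exact le_trans (Nat.div_le_self _ _) hle
    · rw [← hl.1]
      apply Finset.sum_congr rfl
      intro i _
      rw [Nat.div_mul_cancel (hfac i).1]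
  · -- injectivity
    intro l₁ hl₁ hne₁ l₂ hl₂ hne₂ heq
    have hfac : ∀ (l : Fin a →₀ ℕ), 
        (∏ i, (coeff (l i)) (U (k i))) ≠ 0 → ∀ i, k i ∣ l i := by
      intro l hne i
      have := Finset.prod_ne_zero_iff.mp hne i (Finset.mem_univ i)
      simp only [U, coeff_mk] at this
      by_cases hdvd : k i ∣ l i
      · exact hdvd
      · rw [if_neg hdvd] at this; simp at this
    ext i
    have h1 := Nat.div_mul_cancel (hfac l₁ hne₁ i)
    have h2 := Nat.div_mul_cancel (hfac l₂ hne₂ i)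
    have := congrFun heq i
    rw [← h1, ← h2, this]
  · -- surjectivity
    intro s hs hne
    rw [mem_sset] at hs
    refine ⟨Finsupp.equivFunOnFinite.symm (fun i => s i * k i), ?_, ?_, ?_⟩
    · rw [Finset.mem_finsuppAntidiag]
      constructor
      · rw [← hs.2]
        apply Finset.sum_congr rfl
        intro i _
        simp [Finsupp.equivFunOnFinite]
      · intro i _
        exact Finset.mem_univ i
    · rw [Finset.prod_ne_zero_iff]
      intro i _
      simp only [U, coeff_mk, Finsupp.coe_equivFunOnFinite_symm]
      rw [if_pos (dvd_mul_left (k i) (s i)), Nat.mul_div_cancel _ (hk i)]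
      have := (Finset.mem_Icc.1 (hs.1 i)).1
      exact Nat.cast_ne_zero.mpr (by omega)
    · funext i
      simp only [Finsupp.coe_equivFunOnFinite_symm]
      exact Nat.mul_div_cancel _ (hk i)
  · -- value equality
    intro l hl hne
    apply Finset.prod_congr rfl
    intro i _
    have := Finset.prod_ne_zero_iff.mp hne i (Finset.mem_univ i)
    simp only [U, coeff_mk] at this ⊢
    by_cases hdvd : k i ∣ l i
    · rw [if_pos hdvd]
    · rw [if_neg hdvd] at this; simp at this


lemma M_eq_coeff (a n : ℕ) (hn : 1 ≤ n) :
    ((M a n : ℕ) : ℚ) = (coeff n) (∑ k ∈ monoset a 1 n, ∏ i, U (k i)) := by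
  rw [map_sum]
  rw [Finset.sum_congr rfl (fun k hk => coeff_prod_U a n hn k 
    (fun i => (Finset.mem_Icc.1 ((mem_monoset.1 hk).1 i)).1))]
  rw [Finset.sum_sigma']
  rw [M]
  push_cast
  apply Finset.sum_bij' 
    (i := fun f (hf : f ∈ Finset.univ.filter _) => 
      (⟨fun i => ((f i).1 : ℕ), fun i => ((f i).2 : ℕ)⟩ : 
        Σ _k : Fin a → ℕ, Fin a → ℕ))
    (j := fun x hx => fun i => 
      ((⟨x.1 i, by
        have h1 := (mem_monoset.1 (Finset.mem_sigma.1 hx).1).1 i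
        rw [Finset.mem_Icc] at h1
        omega⟩ : Fin (n + 1)), 
       (⟨x.2 i, by
        have h1 := (mem_sset.1 (Finset.mem_sigma.1 hx).2).1 i
        rw [Finset.mem_Icc] at h1
        omega⟩ : Fin (n + 1))))
  case hi =>
    intro f hf
    rw [Finset.mem_filter] at hf
    obtain ⟨-, hpos, hmono, hsum⟩ := hf
    rw [Finset.mem_sigma]
    constructor
    · rw [mem_monoset]
      refine ⟨fun i => Finset.mem_Icc.2 ⟨(hpos i).1, Fin.is_le _⟩, ?_⟩
      intro i j hij
      exact hmono i j hij
    · rw [mem_sset]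
      exact ⟨fun i => Finset.mem_Icc.2 ⟨(hpos i).2, Fin.is_le _⟩, hsum⟩
  case hj =>
    intro x hx
    rw [Finset.mem_sigma] at hx
    obtain ⟨hk, hs⟩ := hx
    rw [mem_monoset] at hk
    rw [mem_sset] at hs
    rw [Finset.mem_filter]
    refine ⟨Finset.mem_univ _, ?_, ?_, ?_⟩
    · intro i
      constructor
      · exact (Finset.mem_Icc.1 (hk.1 i)).1
      · exact (Finset.mem_Icc.1 (hs.1 i)).1
    · intro i j hij
      have := hk.2 i j hij
      simpa [Fin.le_def] using this
    · simpa using hs.2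
  case left_neg =>
    intro x hx
    funext i
    refine Prod.ext ?_ ?_ <;> exact Fin.ext rfl
  case right_neg =>
    intro f hf
    rfl
  case h =>
    intro f hf
    rfl

end

end AAT

/-- if `a ≤ n ≤ 2a` (with `a ≥ 1`), then
`M (a; n) = choose (a+n-1) (n-a) + choose (a+n-2) (n-a-1)`, where the second binomial
coefficient is interpreted as `0` when its lower index `n - a - 1` is negative,
i.e. when `n = a`; in particular `M (a; a) = 1`. -/
theorem M_initial_coefficients (a n : ℕ) (ha : 0 < a) (h1 : a ≤ n) (h2 : n ≤ 2 * a) :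
    M a n = Nat.choose (a + n - 1) (n - a) +
      (if a < n then Nat.choose (a + n - 2) (n - a - 1) else 0) := by
  have hn : 1 ≤ n := le_trans ha h1
  have h := AAT.M_eq_coeff a n hn
  rw [AAT.coeff_A a n ha h1 h2] at h
  have h2' : ((M a n : ℕ) : ℚ) = ((Nat.choose (a + n - 1) (n - a) 
      + (if a < n then Nat.choose (a + n - 2) (n - a - 1) else 0) : ℕ) : ℚ) := by
    rw [h]
    push_cast [apply_ite (Nat.cast : ℕ → ℚ)]
    ring
  exact_mod_cast h2'
end

section
/- Let p ≥ 5 be prime, let m be a positive integer, and set k := 2 + (p−1)p^{m−1}. Then every coefficient of the formal power series (p^m − 1)·E_2(q) − (p−1)·Σ_{i=1}^{m} p^{i−1}·E_k(q^{p^{i−1}}) ∈ ℚ[[q]] is a rational number of p-adic valuation at least m; that is, E_2(q) ≡ ((p−1)/(p^m−1))·Σ_{i=1}^{m} p^{i−1}·E_k(q)|V_{p^{i−1}} (mod p^m), where V_d substitutes q^d for q. In particular, E_2(q) modulo p^m is the reduction of a weight 2 + (p−1)p^{m−1} modular form on SL_2(ℤ). -/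
open Finset PowerSeries

/-- the divisor function `σ_ν(n) = Σ_{d ∣ n} d^ν` -/
def sigmaNu (ν n : ℕ) : ℕ := ∑ d ∈ Nat.divisors n, d ^ ν

/-- The Eisenstein series of even weight `k` as a formal power series:
`E_k(q) = 1 - (2k/B_k) Σ_{n ≥ 1} σ_{k-1}(n) q^n`; for `k = 2j` this is
`1 - (4j/B_{2j}) Σ σ_{2j-1}(n) q^n`.  In particular `Eis 2 = E_2`, `Eis 4 = E_4`,
`Eis 6 = E_6` of the paper. -/
noncomputable def Eis (k : ℕ) : PowerSeries ℚ :=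
  PowerSeries.mk fun n =>
    if n = 0 then 1 else -(2 * k / (bernoulli k)) * (sigmaNu (k - 1) n : ℚ)

/-- The operator `V_d` on `ℚ[[q]]`, substituting `q^d` for `q`. -/
noncomputable def Vop (d : ℕ) (f : PowerSeries ℚ) : PowerSeries ℚ :=
  PowerSeries.mk fun n => if d ∣ n then PowerSeries.coeff (n / d) f else 0



theorem sum_zmod_val (N : ℕ) [NeZero N] (g : ℕ → ℤ) :
    ∑ x : ZMod N, g (x.val) = ∑ a ∈ range N, g a :=
  Finset.sum_nbij' (fun x : ZMod N => x.val) (fun a => (a : ZMod N))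
    (fun x _ => mem_range.mpr (ZMod.val_lt x)) (fun a _ => mem_univ _)
    (fun x _ => ZMod.natCast_zmod_val x)
    (fun a ha => ZMod.val_natCast_of_lt (mem_range.mp ha))
    (fun _ _ => rfl)

theorem sum_two_mul_mod (N : ℕ) (hN : Odd N) (hN0 : 0 < N) (g : ℕ → ℤ) :
    ∑ a ∈ range N, g ((2 * a) % N) = ∑ a ∈ range N, g a := by
  haveI : NeZero N := ⟨hN0.ne'⟩
  have hcop : Nat.Coprime 2 N := Nat.coprime_two_left.mpr hN
  set u : (ZMod N)ˣ := ZMod.unitOfCoprime 2 hcop with hu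
  have key : ∀ n : ℕ, ((u : ZMod N) * ((n : ℕ) : ZMod N)).val = (2 * n) % N := by
    intro n
    have : (u : ZMod N) = ((2 : ℕ) : ZMod N) := rfl
    rw [this, ← Nat.cast_mul, ZMod.val_natCast]
  calc ∑ a ∈ range N, g ((2 * a) % N)
      = ∑ a ∈ range N, (fun n => g (((u : ZMod N) * ((n : ℕ) : ZMod N)).val)) a := by
        apply Finset.sum_congr rfl; intro a _; simp only [key]
    _ = ∑ x : ZMod N, g (((u : ZMod N) * ((x.val : ℕ) : ZMod N)).val) :=
        (sum_zmod_val N (fun n => g (((u : ZMod N) * ((n : ℕ) : ZMod N)).val))).symm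
    _ = ∑ x : ZMod N, g (((u : ZMod N) * x).val) := by
        apply Finset.sum_congr rfl; intro x _; rw [ZMod.natCast_zmod_val]
    _ = ∑ x : ZMod N, g (x.val) :=
        Fintype.sum_bijective (fun x => (u : ZMod N) * x) (Units.mulLeft_bijective u) _ _
          (fun _ => rfl)
    _ = ∑ a ∈ range N, g a := sum_zmod_val N g

noncomputable def Sz (N j : ℕ) : ℤ := ∑ a ∈ range N, (a:ℤ)^j
noncomputable def Tz (N j : ℕ) : ℤ := ∑ a ∈ (range N).filter (fun a => N ≤ 2*a), (a:ℤ)^j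

theorem master_int (N j : ℕ) (hN : Odd N) (hN0 : 0 < N) (hj : 1 ≤ j) :
    ∃ R : ℤ, (2^j - 1) * Sz N j = (N:ℤ) * ((j:ℤ) * 2^(j-1) * Tz N (j-1)) + (N:ℤ)^2 * R := by
  have h1 : ∑ a ∈ range N, (((2*a) % N : ℕ) : ℤ)^j = Sz N j :=
    sum_two_mul_mod N hN hN0 (fun n => (n:ℤ)^j)
  have h3 : (2^j - 1) * Sz N j
      = ∑ a ∈ range N, ((2*(a:ℤ))^j - (((2*a) % N : ℕ) : ℤ)^j) := by
    rw [Finset.sum_sub_distrib, h1, sub_mul, one_mul]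
    congr 1
    rw [Sz, Finset.mul_sum]
    apply Finset.sum_congr rfl; intro a _; rw [mul_pow]
  set F := (range N).filter (fun a => N ≤ 2*a) with hF
  have h4 : (2^j - 1) * Sz N j = ∑ a ∈ F, ((2*(a:ℤ))^j - (((2*a) % N : ℕ) : ℤ)^j) := by
    rw [h3, hF]
    symm
    apply Finset.sum_filter_of_ne
    intro a _ hne
    by_contra hlt
    push_neg at hlt
    rw [Nat.mod_eq_of_lt hlt] at hne
    simp at hne
  have h5 : ∀ a ∈ F, (((2*a) % N : ℕ) : ℤ) = 2*(a:ℤ) - N := by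
    intro a ha
    rw [hF, mem_filter, mem_range] at ha
    obtain ⟨haN, hle⟩ := ha
    rw [Nat.mod_eq_sub_mod hle, Nat.mod_eq_of_lt (by omega)]
    push_cast [Nat.cast_sub hle]
    ring
  -- rewrite via geom_sum₂
  set w : ℕ → ℤ := fun a => ∑ i ∈ range j, (2*(a:ℤ))^i * (2*(a:ℤ) - N)^(j-1-i) with hw
  have h6 : (2^j - 1) * Sz N j = (∑ a ∈ F, w a) * N := by
    rw [h4, Finset.sum_mul]
    apply Finset.sum_congr rfl
    intro a ha
    rw [h5 a ha, hw]
    have := geom_sum₂_mul (2*(a:ℤ)) (2*(a:ℤ) - N) j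
    rw [show (2*(a:ℤ) - (2*(a:ℤ) - N)) = (N:ℤ) by ring] at this
    rw [this]
  -- W ≡ j 2^{j-1} T mod N
  have h7 : (N:ℤ) ∣ ((∑ a ∈ F, w a) - (j:ℤ) * 2^(j-1) * Tz N (j-1)) := by
    rw [Tz, ← hF, Finset.mul_sum, ← Finset.sum_sub_distrib]
    apply Finset.dvd_sum
    intro a ha
    have hterm : (j:ℤ) * 2^(j-1) * (a:ℤ)^(j-1) = ∑ i ∈ range j, (2*(a:ℤ))^i * (2*(a:ℤ))^(j-1-i) := by
      have : ∀ i ∈ range j, (2*(a:ℤ))^i * (2*(a:ℤ))^(j-1-i) = 2^(j-1) * (a:ℤ)^(j-1) := by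
        intro i hi
        rw [mem_range] at hi
        rw [← pow_add, show i + (j-1-i) = j-1 by omega, mul_pow]
      rw [Finset.sum_congr rfl this, Finset.sum_const, card_range, nsmul_eq_mul]
      ring
    rw [hterm, hw, ← Finset.sum_sub_distrib]
    apply Finset.dvd_sum
    intro i _
    rw [← mul_sub]
    apply Dvd.dvd.mul_left
    have hmod : (2*(a:ℤ) - N) ≡ 2*(a:ℤ) [ZMOD (N:ℤ)] := by
      have := (Int.ModEq.refl (2*(a:ℤ))).sub (Int.modEq_zero_iff_dvd.mpr (dvd_refl (N:ℤ)))
      simpa using this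
    exact ((hmod.pow (j-1-i)).symm).dvd
  obtain ⟨R, hR⟩ := h7
  refine ⟨R, ?_⟩
  have : (∑ a ∈ F, w a) = (j:ℤ) * 2^(j-1) * Tz N (j-1) + N * R := by linarith [hR]
  rw [h6, this]
  ring

noncomputable def Uz (p N j : ℕ) : ℤ :=
  ∑ a ∈ (range N).filter (fun a => N ≤ 2*a ∧ ¬ p ∣ a), (a:ℤ)^j

noncomputable def Phi (j N : ℕ) : ℚ :=
  ∑ i ∈ range j, bernoulli i * ((j+1).choose i) * (N:ℚ)^(j-1-i) / (j+1)

theorem faulhaber_split (N j : ℕ) :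
    ((Sz N j : ℤ) : ℚ) = (N:ℚ) * bernoulli j + (N:ℚ)^2 * Phi j N := by
  have h0 : ((Sz N j : ℤ) : ℚ) = ∑ a ∈ range N, (a:ℚ)^j := by
    rw [Sz]; push_cast; ring
  rw [h0, sum_range_pow, Finset.sum_range_succ]
  have hlast : (bernoulli j * ((j+1).choose j) * (N:ℚ)^(j+1-j) / (j+1)) = (N:ℚ) * bernoulli j := by
    rw [Nat.choose_succ_self_right, Nat.add_sub_cancel_left, pow_one]
    have : ((j:ℚ)+1) ≠ 0 := by positivity
    field_simp
    push_cast
    ring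
  rw [hlast, Phi, Finset.mul_sum, add_comm]
  congr 1
  apply Finset.sum_congr rfl
  intro i hi
  rw [mem_range] at hi
  rw [show j + 1 - i = 2 + (j-1-i) by omega, pow_add]
  ring

theorem tz_split (p N' j : ℕ) (hp0 : 0 < p) :
    Tz (p*N') j = Uz p (p*N') j + (p:ℤ)^j * Tz N' j := by
  rw [Tz, ← Finset.sum_filter_add_sum_filter_not _ (fun a => ¬ p ∣ a)]
  congr 1
  · rw [Uz, Finset.filter_filter]
  · rw [Tz, Finset.mul_sum]
    symm
    apply Finset.sum_nbij' (fun b => p * b) (fun a => a / p)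
    · intro b hb
      simp only [mem_filter, mem_range, not_not] at hb ⊢
      refine ⟨⟨?_, ?_⟩, dvd_mul_right _ _⟩
      · exact (Nat.mul_lt_mul_left hp0).mpr hb.1
      · calc p * N' ≤ p * (2*b) := Nat.mul_le_mul_left p hb.2
          _ = 2 * (p*b) := by ring
    · intro a ha
      simp only [mem_filter, mem_range, not_not] at ha ⊢
      obtain ⟨⟨h1, h2⟩, c, rfl⟩ := ha
      rw [Nat.mul_div_cancel_left c hp0]
      constructor
      · exact Nat.lt_of_mul_lt_mul_left h1
      · rw [show 2 * (p*c) = p * (2*c) by ring] at h2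
        exact Nat.le_of_mul_le_mul_left h2 hp0
    · intro b _; rw [Nat.mul_div_cancel_left b hp0]
    · intro a ha
      simp only [mem_filter, mem_range, not_not] at ha
      obtain ⟨_, c, rfl⟩ := ha
      rw [Nat.mul_div_cancel_left c hp0]
    · intro b _
      push_cast
      ring

section Padic
variable (p : ℕ) [hp : Fact p.Prime]

noncomputable def Cq (j : ℕ) : ℝ :=
  ∑ i ∈ range j, ‖((bernoulli i * ((j+1).choose i) / (j+1) : ℚ) : ℚ_[p])‖

theorem phi_norm_le (j N : ℕ) : ‖((Phi j N : ℚ) : ℚ_[p])‖ ≤ Cq p j := by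
  rw [Phi, Rat.cast_sum]
  refine le_trans (norm_sum_le _ _) ?_
  rw [Cq]
  apply Finset.sum_le_sum
  intro i _
  have heq : ((bernoulli i * ((j+1).choose i) * (N:ℚ)^(j-1-i) / (j+1) : ℚ) : ℚ_[p])
      = ((bernoulli i * ((j+1).choose i) / (j+1) : ℚ) : ℚ_[p]) * (((N^(j-1-i) : ℕ) : ℤ) : ℚ_[p]) := by
    push_cast
    ring
  rw [heq, norm_mul]
  calc ‖((bernoulli i * ((j+1).choose i) / (j+1) : ℚ) : ℚ_[p])‖ * ‖(((N^(j-1-i) : ℕ) : ℤ) : ℚ_[p])‖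
      ≤ ‖((bernoulli i * ((j+1).choose i) / (j+1) : ℚ) : ℚ_[p])‖ * 1 := by
        apply mul_le_mul_of_nonneg_left (Padic.norm_int_le_one _) (norm_nonneg _)
    _ = _ := mul_one _

theorem master_padic (M j : ℕ) (hp2 : p ≠ 2) (hM : 1 ≤ M) (hj : 1 ≤ j) :
    ∃ G : ℚ_[p], ‖G‖ ≤ Cq p j + 1 ∧
      ((2^j - 1 : ℚ_[p])) * ((bernoulli j : ℚ) : ℚ_[p])
        = (j:ℚ_[p]) * 2^(j-1) * ((Tz (p^M) (j-1) : ℤ) : ℚ_[p]) + ((p:ℚ_[p]))^M * G := by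
  have hodd : Odd (p^M) := (hp.out.odd_of_ne_two hp2).pow
  have hN0 : 0 < p ^ M := pow_pos hp.out.pos M
  obtain ⟨R, hR⟩ := master_int (p^M) j hodd hN0 hj
  -- cast both identities to ℚ_[p]
  have hcast : ((2:ℚ_[p])^j - 1) * ((Sz (p^M) j : ℤ) : ℚ_[p])
      = ((p:ℚ_[p]))^M * ((j:ℚ_[p]) * 2^(j-1) * ((Tz (p^M) (j-1) : ℤ) : ℚ_[p]))
        + (((p:ℚ_[p]))^M)^2 * ((R : ℤ) : ℚ_[p]) := by
    have := congrArg (fun z : ℤ => (z : ℚ_[p])) hR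
    push_cast at this ⊢
    convert this using 2 <;> push_cast <;> ring
  have hfaul : ((Sz (p^M) j : ℤ) : ℚ_[p])
      = ((p:ℚ_[p]))^M * ((bernoulli j : ℚ) : ℚ_[p])
        + (((p:ℚ_[p]))^M)^2 * ((Phi j (p^M) : ℚ) : ℚ_[p]) := by
    have := congrArg (fun z : ℚ => (z : ℚ_[p])) (faulhaber_split (p^M) j)
    push_cast at this ⊢
    convert this using 2 <;> push_cast <;> ring
  set P : ℚ_[p] := ((p:ℚ_[p]))^M with hP
  have hPne : P ≠ 0 := by
    rw [hP]
    apply pow_ne_zero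
    exact_mod_cast Nat.cast_ne_zero.mpr hp.out.pos.ne'
  refine ⟨((R:ℤ) : ℚ_[p]) - ((2:ℚ_[p])^j - 1) * ((Phi j (p^M) : ℚ) : ℚ_[p]), ?_, ?_⟩
  · calc ‖((R:ℤ) : ℚ_[p]) - ((2:ℚ_[p])^j - 1) * ((Phi j (p^M) : ℚ) : ℚ_[p])‖
        ≤ ‖((R:ℤ) : ℚ_[p])‖ + ‖((2:ℚ_[p])^j - 1) * ((Phi j (p^M) : ℚ) : ℚ_[p])‖ := norm_sub_le _ _
      _ ≤ 1 + (1 * (Cq p j)) := by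
          apply add_le_add (Padic.norm_int_le_one _)
          rw [norm_mul]
          apply mul_le_mul ?h1 (phi_norm_le p j (p^M)) (norm_nonneg _) zero_le_one
          have : ((2:ℚ_[p])^j - 1) = (((2^j - 1 : ℤ)) : ℚ_[p]) := by push_cast; ring
          rw [this]
          exact Padic.norm_int_le_one _
      _ = Cq p j + 1 := by ring
  · -- divide the identity by P
    apply mul_left_cancel₀ hPne
    have expand : P * (((2:ℚ_[p])^j - 1) * ((bernoulli j : ℚ) : ℚ_[p]))
        = ((2:ℚ_[p])^j - 1) * (P * ((bernoulli j : ℚ) : ℚ_[p])) := by ring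
    rw [expand]
    have key : ((2:ℚ_[p])^j - 1) * (P * ((bernoulli j : ℚ) : ℚ_[p]) + P^2 * ((Phi j (p^M) : ℚ) : ℚ_[p]))
        = P * ((j:ℚ_[p]) * 2^(j-1) * ((Tz (p^M) (j-1) : ℤ) : ℚ_[p]))
          + P^2 * ((R : ℤ) : ℚ_[p]) := by rw [← hfaul]; exact hcast
    have : ((2:ℚ_[p])^j - 1) * (P * ((bernoulli j : ℚ) : ℚ_[p]))
        = P * ((j:ℚ_[p]) * 2^(j-1) * ((Tz (p^M) (j-1) : ℤ) : ℚ_[p]))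
          + P^2 * ((R : ℤ) : ℚ_[p]) - ((2:ℚ_[p])^j - 1) * (P^2 * ((Phi j (p^M) : ℚ) : ℚ_[p])) := by
      rw [← key]; ring
    rw [this]
    ring


theorem int_norm_one (z : ℤ) (h : ¬ (p:ℤ) ∣ z) : ‖((z:ℤ) : ℚ_[p])‖ = 1 := by
  refine le_antisymm (Padic.norm_int_le_one _) ?_
  by_contra hlt
  push_neg at hlt
  exact h (Padic.norm_intCast_lt_one_iff.mp hlt)

theorem int_norm_le_of_dvd (z : ℤ) (t : ℕ) (h : ((p:ℤ))^t ∣ z) :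
    ‖((z:ℤ) : ℚ_[p])‖ ≤ (p:ℝ)^(-(t:ℤ)) :=
  (Padic.norm_int_le_pow_iff_dvd z t).mpr h

theorem euler_split_padic (M j : ℕ) (hp2 : p ≠ 2) (hM : 2 ≤ M) (hj : 2 ≤ j) :
    ∃ H : ℚ_[p], ‖H‖ ≤ 2*(Cq p j + 1) ∧
      ((2^j - 1 : ℚ_[p])) * (1 - ((p:ℚ_[p]))^(j-1)) * ((bernoulli j : ℚ) : ℚ_[p])
        = (j:ℚ_[p]) * 2^(j-1) * ((Uz p (p^M) (j-1) : ℤ) : ℚ_[p]) + ((p:ℚ_[p]))^M * H := by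
  obtain ⟨G, hGn, hG⟩ := master_padic p M j hp2 (by omega) (by omega)
  obtain ⟨G', hGn', hG'⟩ := master_padic p (M-1) j hp2 (by omega) (by omega)
  have hMM : p * p^(M-1) = p^M := by
    rw [← pow_succ']
    congr 1
    omega
  have hsplitz := tz_split p (p^(M-1)) (j-1) hp.out.pos
  rw [hMM] at hsplitz
  have hsplit : ((Tz (p^M) (j-1) : ℤ) : ℚ_[p])
      = ((Uz p (p^M) (j-1) : ℤ) : ℚ_[p]) + ((p:ℚ_[p]))^(j-1) * ((Tz (p^(M-1)) (j-1) : ℤ) : ℚ_[p]) := by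
    have := congrArg (fun z : ℤ => (z : ℚ_[p])) hsplitz
    push_cast at this
    exact this
  have hexp : ((p:ℚ_[p]))^(j-1) * ((p:ℚ_[p]))^(M-1) = ((p:ℚ_[p]))^M * ((p:ℚ_[p]))^(j-2) := by
    rw [← pow_add, ← pow_add]
    congr 1
    omega
  refine ⟨G - ((p:ℚ_[p]))^(j-2) * G', ?_, ?_⟩
  · calc ‖G - ((p:ℚ_[p]))^(j-2) * G'‖ ≤ ‖G‖ + ‖((p:ℚ_[p]))^(j-2) * G'‖ := norm_sub_le _ _
      _ ≤ (Cq p j + 1) + 1 * (Cq p j + 1) := by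
          apply add_le_add hGn
          rw [norm_mul]
          apply mul_le_mul ?h1 hGn' (norm_nonneg _) zero_le_one
          have : ((p:ℚ_[p]))^(j-2) = (((p^(j-2) : ℕ) : ℤ) : ℚ_[p]) := by push_cast; ring
          rw [this]
          exact Padic.norm_int_le_one _
      _ = 2*(Cq p j + 1) := by ring
  · linear_combination hG - ((p:ℚ_[p]))^(j-1) * hG' + ((j:ℚ_[p]) * 2^(j-1)) * hsplit - G' * hexp

theorem euler_pow_nat (m : ℕ) (hm : 0 < m) (a : ℕ) (ha : ¬ p ∣ a) :
    a ^ ((p-1) * p^(m-1)) ≡ 1 [MOD p^m] := by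
  have hcop : (a).Coprime (p^m) :=
    (Nat.Coprime.pow_right _ ((Nat.Prime.coprime_iff_not_dvd hp.out).mpr ha).symm)
  have h := Nat.ModEq.pow_totient hcop
  rwa [Nat.totient_prime_pow hp.out hm, mul_comm] at h

theorem euler_pow_dvd (m : ℕ) (hm : 0 < m) (a : ℕ) (ha : ¬ p ∣ a) :
    ((p:ℤ))^m ∣ ((a:ℤ) ^ ((p-1) * p^(m-1)) - 1) := by
  have h := (euler_pow_nat p m hm a ha).dvd
  push_cast at h
  exact (dvd_sub_comm.mp h)


theorem U_compare (m : ℕ) (hm : 0 < m) (hp5 : 5 ≤ p) (N : ℕ) :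
    ((p:ℤ))^m ∣ (2^(2 + (p-1)*p^(m-1) - 1) * Uz p N (2 + (p-1)*p^(m-1) - 1) - 2 * Uz p N 1) := by
  set K := 2 + (p-1)*p^(m-1) with hK
  rw [Uz, Uz, Finset.mul_sum, Finset.mul_sum, ← Finset.sum_sub_distrib]
  apply Finset.dvd_sum
  intro a ha
  rw [mem_filter] at ha
  obtain ⟨-, -, hpa⟩ := ha
  have hp2a : ¬ p ∣ 2*a := by
    intro h
    rcases (Nat.Prime.dvd_mul hp.out).mp h with h2 | h2
    · have := Nat.le_of_dvd (by norm_num) h2; omega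
    · exact hpa h2
  have heuler := euler_pow_dvd p m hm (2*a) hp2a
  have hexp : (p-1) * p^(m-1) = K - 2 := by omega
  rw [hexp] at heuler
  have key : (2:ℤ)^(K-1) * (a:ℤ)^(K-1) - 2 * (a:ℤ)^1
      = (2 * (a:ℤ)) * (((2*a : ℕ):ℤ)^(K-2) - 1) := by
    have h1 : (2:ℤ)^(K-1) * (a:ℤ)^(K-1) = ((2*a:ℕ):ℤ)^(K-2) * (2 * a) := by
      push_cast
      rw [← mul_pow]
      rw [show K - 1 = (K-2) + 1 by omega]
      ring
    rw [h1]
    push_cast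
    ring
  rw [key]
  exact (heuler).mul_left _

theorem bern_key (m : ℕ) (hm : 0 < m) (hp5 : 5 ≤ p) :
    ‖(1 - ((p:ℚ_[p]))^(2 + (p-1)*p^(m-1) - 1)) * ((bernoulli (2 + (p-1)*p^(m-1)) : ℚ) : ℚ_[p])
      - ((2 + (p-1)*p^(m-1) : ℕ) : ℚ_[p]) * (1 - (p:ℚ_[p])) / 12‖ ≤ (p:ℝ)^(-(m:ℤ)) ∧
    ‖(1 - ((p:ℚ_[p]))^(2 + (p-1)*p^(m-1) - 1)) * ((bernoulli (2 + (p-1)*p^(m-1)) : ℚ) : ℚ_[p])‖ = 1 := by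
  have hp2 : p ≠ 2 := by omega
  have hp1R : (1:ℝ) < p := by exact_mod_cast (by omega : 1 < p)
  have hp0R : (0:ℝ) < p := lt_trans one_pos hp1R
  set K := 2 + (p-1)*p^(m-1) with hK
  set ε : ℝ := (p:ℝ)^(-(m:ℤ)) with hε
  have hεpos : 0 < ε := zpow_pos hp0R _
  have hε1 : ε < 1 := zpow_lt_one_of_neg₀ hp1R (by omega)
  -- m ≤ K - 2
  have hmK : m ≤ (p-1) * p^(m-1) := by
    have h1 : m - 1 < 2^(m-1) := Nat.lt_two_pow_self
    have h2 : 2^(m-1) ≤ p^(m-1) := Nat.pow_le_pow_left (by omega) _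
    have h3 : p^(m-1) ≤ (p-1) * p^(m-1) := Nat.le_mul_of_pos_left _ (by omega)
    omega
  have hK2 : K - 2 = (p-1) * p^(m-1) := by omega
  -- p does not divide K
  have hpK : ¬ p ∣ K := by
    by_cases hm1 : m = 1
    · have hKval : K = p + 1 := by rw [hK, hm1]; simp; omega
      intro h
      rw [hKval] at h
      have h1 := Nat.dvd_sub h (dvd_refl p)
      rw [Nat.add_sub_cancel_left] at h1
      have := Nat.le_of_dvd one_pos h1
      omega
    · intro h
      have hdvd : p ∣ (p-1) * p^(m-1) := (dvd_pow_self p (by omega)).mul_left _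
      have h2 : p ∣ 2 := by
        have h3 := Nat.dvd_sub h hdvd
        rwa [hK, Nat.add_sub_cancel] at h3
      have := Nat.le_of_dvd (by norm_num) h2
      omega
  -- Euler: p^m ∣ 2^K - 4
  have h2K4 : ((p:ℤ))^m ∣ ((2:ℤ)^K - 4) := by
    have h := euler_pow_dvd p m hm 2 (by
      intro hdvd
      have := Nat.le_of_dvd (by norm_num) hdvd
      omega)
    rw [hK2.symm] at h
    push_cast at h
    have hKge : 2 ≤ K := by rw [hK]; omega
    obtain ⟨e, he⟩ : ∃ e, K = e + 2 := ⟨K-2, by omega⟩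
    have he2 : K - 2 = e := by omega
    have h4 : (2:ℤ)^K - 4 = 4 * ((2:ℤ)^(K-2) - 1) := by
      rw [he2, he, pow_add]
      ring
    rw [h4]
    exact h.mul_left _
  -- norm facts
  have h3n : ‖((3:ℤ) : ℚ_[p])‖ = 1 := int_norm_one p 3 (by
    intro h
    have := Int.le_of_dvd (by norm_num) h
    have h5 : (5:ℤ) ≤ p := by exact_mod_cast hp5
    omega)
  have h12n : ‖((12:ℤ) : ℚ_[p])‖ = 1 := int_norm_one p 12 (by
    intro h
    have hpdvd : (p:ℕ) ∣ 12 := Int.ofNat_dvd.mp (by exact_mod_cast h)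
    have hple : p ≤ 12 := Nat.le_of_dvd (by norm_num) hpdvd
    interval_cases p <;> first | omega | (exact absurd hp.out (by decide)))
  have hKn : ‖((K:ℕ) : ℚ_[p])‖ = 1 := by
    have h := int_norm_one p (K:ℤ) (fun hdvd => hpK (Int.ofNat_dvd.mp hdvd))
    exact_mod_cast h
  have h1pn : ‖(1 - (p:ℚ_[p]))‖ = 1 := by
    have hrw : (1 - (p:ℚ_[p])) = (((1 - p : ℤ)) : ℚ_[p]) := by push_cast; ring
    rw [hrw]
    apply int_norm_one
    intro h
    have h1 : (p:ℤ) ∣ 1 := by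
      have := h.add (dvd_refl (p:ℤ))
      simpa using this
    have := Int.le_of_dvd one_pos h1
    have h5 : (5:ℤ) ≤ p := by exact_mod_cast hp5
    omega
  -- choose M large
  have h2n : ‖((2:ℤ) : ℚ_[p])‖ = 1 := int_norm_one p 2 (by
    intro h
    have := Int.le_of_dvd (by norm_num) h
    have h5 : (5:ℤ) ≤ p := by exact_mod_cast hp5
    omega)
  have h4n : ‖((4:ℤ) : ℚ_[p])‖ = 1 := int_norm_one p 4 (by
    intro h
    have := Int.le_of_dvd (by norm_num) h
    have h5 : (5:ℤ) ≤ p := by exact_mod_cast hp5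
    omega)
  set D : ℝ := 2*(Cq p K + 1) + 2*(Cq p 2 + 1) with hD
  obtain ⟨t, ht⟩ := pow_unbounded_of_one_lt D hp1R
  set M : ℕ := m + t + 2 with hM
  obtain ⟨HK, hHKn, hidK⟩ := euler_split_padic p M K hp2 (by omega) (by rw [hK]; omega)
  obtain ⟨H2, hH2n, hid2⟩ := euler_split_padic p M 2 hp2 (by omega) (by omega)
  have hb2 : (bernoulli 2 : ℚ) = 1/6 := by norm_num [bernoulli]
  rw [hb2] at hid2
  push_cast at hid2
  norm_num at hid2
  set P : ℚ_[p] := (p:ℚ_[p]) with hP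
  set B : ℚ_[p] := ((bernoulli K : ℚ) : ℚ_[p]) with hB
  set UK : ℚ_[p] := ((Uz p (p^M) (K-1) : ℤ) : ℚ_[p]) with hUK
  set U1 : ℚ_[p] := ((Uz p (p^M) 1 : ℤ) : ℚ_[p]) with hU1
  set X : ℚ_[p] := (1 - P^(K-1)) * B with hX
  -- step A
  have hcmp : ‖(K:ℚ_[p]) * (2^(K-1) * UK - 2 * U1)‖ ≤ ε := by
    have hdvd : ((p:ℤ))^m ∣ ((K:ℤ) * (2^(K-1) * Uz p (p^M) (K-1) - 2 * Uz p (p^M) 1)) :=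
      (U_compare p m hm hp5 (p^M)).mul_left _
    have := int_norm_le_of_dvd p _ m hdvd
    rw [hε]
    convert this using 2
    rw [hUK, hU1]
    push_cast
    ring
  -- step B
  have hiden : (2^K - 1 : ℚ_[p]) * X - (K:ℚ_[p]) * (1 - P) / 4
      = (K:ℚ_[p]) * (2^(K-1) * UK - 2 * U1) + P^M * (HK - (K:ℚ_[p])/2 * H2) := by
    rw [hX]
    linear_combination hidK - ((K:ℚ_[p])/2) * hid2
  have hPMn : ‖P^M‖ = (p:ℝ)^(-(M:ℤ)) := Padic.norm_p_pow M
  have hWn : ‖HK - (K:ℚ_[p])/2 * H2‖ ≤ D := by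
    calc ‖HK - (K:ℚ_[p])/2 * H2‖ ≤ ‖HK‖ + ‖(K:ℚ_[p])/2 * H2‖ := norm_sub_le _ _
      _ ≤ 2*(Cq p K + 1) + 1 * (2*(Cq p 2 + 1)) := by
          apply add_le_add hHKn
          rw [norm_mul]
          apply mul_le_mul ?h1 hH2n (norm_nonneg _) zero_le_one
          rw [norm_div, hKn]
          rw [show ((2:ℚ_[p])) = (((2:ℤ)):ℚ_[p]) by push_cast; ring, h2n]
          norm_num
      _ = D := by rw [hD]; ring
  have hsmall : ‖P^M * (HK - (K:ℚ_[p])/2 * H2)‖ ≤ ε := by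
    rw [norm_mul, hPMn]
    have h1 : (p:ℝ)^(-(M:ℤ)) * ‖HK - (K:ℚ_[p])/2 * H2‖ ≤ (p:ℝ)^(-(M:ℤ)) * D :=
      mul_le_mul_of_nonneg_left hWn (le_of_lt (zpow_pos hp0R _))
    have h2 : (p:ℝ)^(-(M:ℤ)) * D < (p:ℝ)^(-(M:ℤ)) * (p:ℝ)^t :=
      mul_lt_mul_of_pos_left ht (zpow_pos hp0R _)
    have h3 : (p:ℝ)^(-(M:ℤ)) * (p:ℝ)^t ≤ ε := by
      rw [show ((p:ℝ))^t = ((p:ℝ))^((t:ℤ)) from (zpow_natCast _ t).symm,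
        ← zpow_add₀ (ne_of_gt hp0R), hε]
      apply zpow_le_zpow_right₀ (le_of_lt hp1R)
      omega
    exact le_trans h1 (le_trans (le_of_lt h2) h3)
  have hmain : ‖(2^K - 1 : ℚ_[p]) * X - (K:ℚ_[p]) * (1 - P) / 4‖ ≤ ε := by
    rw [hiden]
    exact le_trans (Padic.nonarchimedean _ _) (max_le hcmp hsmall)
  -- step C : norm of 2^K - 1
  have h2K1 : ‖(2^K - 1 : ℚ_[p])‖ = 1 := by
    rw [show ((2:ℚ_[p])^K - 1) = (((2^K - 1 : ℤ)):ℚ_[p]) by push_cast; ring]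
    apply int_norm_one
    intro hdvd
    have hd4 : (p:ℤ) ∣ (2^K - 4) := dvd_trans (dvd_pow_self _ hm.ne') h2K4
    have h3 : (p:ℤ) ∣ 3 := by
      have := dvd_sub hdvd hd4
      simpa using this
    have := Int.le_of_dvd (by norm_num) h3
    have h5 : (5:ℤ) ≤ p := by exact_mod_cast hp5
    omega
  -- norm of target K(1-P)/4
  have htgt4 : ‖(K:ℚ_[p]) * (1 - P) / 4‖ = 1 := by
    rw [norm_div, norm_mul, hKn, hP, h1pn]
    rw [show ((4:ℚ_[p])) = (((4:ℤ)):ℚ_[p]) by push_cast; ring, h4n]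
    norm_num
  -- step D : ‖X‖ = 1
  have hprodn : ‖(2^K - 1 : ℚ_[p]) * X‖ = 1 := by
    have hdecomp : (2^K - 1 : ℚ_[p]) * X
        = (K:ℚ_[p]) * (1 - P) / 4 + ((2^K - 1 : ℚ_[p]) * X - (K:ℚ_[p]) * (1 - P) / 4) := by ring
    rw [hdecomp, Padic.add_eq_max_of_ne, htgt4]
    · exact max_eq_left (le_trans hmain (le_of_lt hε1))
    · rw [htgt4]
      intro hcontra
      have := lt_of_le_of_lt hmain hε1
      rw [← hcontra] at this
      exact lt_irrefl _ this
  have hXn : ‖X‖ = 1 := by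
    rw [norm_mul, h2K1, one_mul] at hprodn
    exact hprodn
  refine ⟨?_, hXn⟩
  -- step E
  have h3X : ‖(3:ℚ_[p]) * X - (K:ℚ_[p]) * (1 - P) / 4‖ ≤ ε := by
    have hdecomp : (3:ℚ_[p]) * X - (K:ℚ_[p]) * (1 - P) / 4
        = ((2^K - 1 : ℚ_[p]) * X - (K:ℚ_[p]) * (1 - P) / 4) + (-(((2^K - 4 : ℤ)):ℚ_[p]) * X) := by
      push_cast
      ring
    rw [hdecomp]
    refine le_trans (Padic.nonarchimedean _ _) (max_le hmain ?_)
    rw [neg_mul, norm_neg, norm_mul, hXn, mul_one, hε]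
    exact int_norm_le_of_dvd p _ m h2K4
  -- step F
  have hfinal : X - (K:ℚ_[p]) * (1 - P) / 12
      = ((3:ℚ_[p]) * X - (K:ℚ_[p]) * (1 - P) / 4) / 3 := by ring
  rw [hfinal, norm_div]
  rw [show ((3:ℚ_[p])) = (((3:ℤ)):ℚ_[p]) by push_cast; ring, h3n, div_one]
  exact h3X

section ClaimE
variable (p : ℕ) [hp : Fact p.Prime]

theorem divisors_filter_not_dvd (x : ℕ) (hx : x ≠ 0) :
    x.divisors.filter (fun d => ¬ p ∣ d) = (x / p ^ x.factorization p).divisors := by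
  ext d
  simp only [mem_filter, Nat.mem_divisors]
  constructor
  · rintro ⟨⟨hdx, -⟩, hpd⟩
    refine ⟨?_, (Nat.ordCompl_pos p hx).ne'⟩
    have hcop : d.Coprime (p ^ x.factorization p) :=
      Nat.Coprime.pow_right _ (Nat.coprime_comm.mp ((Nat.Prime.coprime_iff_not_dvd hp.out).mpr hpd))
    apply hcop.dvd_of_dvd_mul_left
    rwa [Nat.ordProj_mul_ordCompl_eq_self]
  · rintro ⟨hdvd, -⟩
    refine ⟨⟨hdvd.trans (Nat.ordCompl_dvd x p), hx⟩, fun h => ?_⟩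
    exact Nat.not_dvd_ordCompl hp.out hx (h.trans hdvd)

theorem sigma_congr (m : ℕ) (hp5 : 5 ≤ p) (hm : 0 < m) (x : ℕ) (hx : 0 < x) :
    ((p:ℤ))^m ∣ ((sigmaNu (2 + (p-1)*p^(m-1) - 1) x : ℤ)
      - (sigmaNu 1 (x / p ^ x.factorization p) : ℤ)) := by
  have hmK : m ≤ (p-1) * p^(m-1) := by
    have h1 : m - 1 < 2^(m-1) := Nat.lt_two_pow_self
    have h2 : 2^(m-1) ≤ p^(m-1) := Nat.pow_le_pow_left (by omega) _
    have h3 : p^(m-1) ≤ (p-1) * p^(m-1) := Nat.le_mul_of_pos_left _ (by omega)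
    omega
  set K := 2 + (p-1)*p^(m-1) with hK
  have hK2 : K - 2 = (p-1) * p^(m-1) := by omega
  have hKm : m ≤ K - 1 := by omega
  -- write both sigmaNu as sums, split by divisibility
  have hσ1 : (sigmaNu 1 (x / p ^ x.factorization p) : ℤ)
      = ∑ d ∈ x.divisors.filter (fun d => ¬ p ∣ d), (d:ℤ) := by
    rw [divisors_filter_not_dvd p x hx.ne', sigmaNu]
    push_cast
    apply Finset.sum_congr rfl
    intro d _
    rw [pow_one]
  have hσK : (sigmaNu (K-1) x : ℤ)
      = (∑ d ∈ x.divisors.filter (fun d => p ∣ d), (d:ℤ)^(K-1))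
        + ∑ d ∈ x.divisors.filter (fun d => ¬ p ∣ d), (d:ℤ)^(K-1) := by
    rw [sigmaNu]
    push_cast
    rw [Finset.sum_filter_add_sum_filter_not]
  rw [hσK, hσ1]
  have hsplit : (∑ d ∈ x.divisors.filter (fun d => p ∣ d), (d:ℤ)^(K-1))
        + (∑ d ∈ x.divisors.filter (fun d => ¬ p ∣ d), (d:ℤ)^(K-1))
        - (∑ d ∈ x.divisors.filter (fun d => ¬ p ∣ d), (d:ℤ))
      = (∑ d ∈ x.divisors.filter (fun d => p ∣ d), (d:ℤ)^(K-1))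
        + (∑ d ∈ x.divisors.filter (fun d => ¬ p ∣ d), ((d:ℤ)^(K-1) - (d:ℤ))) := by
    rw [Finset.sum_sub_distrib]
    ring
  rw [hsplit]
  apply dvd_add
  · apply Finset.dvd_sum
    intro d hd
    rw [mem_filter] at hd
    obtain ⟨-, c, rfl⟩ := hd
    have : ((p*c : ℕ):ℤ)^(K-1) = (p:ℤ)^(K-1) * (c:ℤ)^(K-1) := by push_cast; ring
    rw [this]
    exact Dvd.dvd.mul_right (pow_dvd_pow _ hKm) _
  · apply Finset.dvd_sum
    intro d hd
    rw [mem_filter] at hd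
    obtain ⟨-, hpd⟩ := hd
    have heuler := euler_pow_dvd p m hm d hpd
    rw [hK2.symm] at heuler
    have : (d:ℤ)^(K-1) - (d:ℤ) = (d:ℤ) * ((d:ℤ)^(K-2) - 1) := by
      rw [show K - 1 = (K-2) + 1 by omega]
      ring
    rw [this]
    exact heuler.mul_left _
theorem ordCompl_div_pow (n i : ℕ) (hn : n ≠ 0) (hi : p^i ∣ n) :
    (n / p^i) / p ^ ((n / p^i).factorization p) = n / p ^ n.factorization p := by
  have hia : i ≤ n.factorization p := (Nat.Prime.pow_dvd_iff_le_factorization hp.out hn).mp hi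
  have hfac : (n / p^i).factorization p = n.factorization p - i := by
    rw [Nat.factorization_div hi]
    simp [Nat.Prime.factorization_pow hp.out]
  rw [hfac, Nat.div_div_eq_div_mul, ← pow_add]
  congr 2
  omega

theorem sigmaNu_eq_sigma (ν x : ℕ) : sigmaNu ν x = ArithmeticFunction.sigma ν x := by
  rw [sigmaNu, ArithmeticFunction.sigma_apply]

theorem sigma_one_factor (n : ℕ) (hn : n ≠ 0) :
    (sigmaNu 1 n : ℕ) = (∑ i ∈ range (n.factorization p + 1), p^i)
      * sigmaNu 1 (n / p ^ n.factorization p) := by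
  conv_lhs => rw [sigmaNu_eq_sigma, ← Nat.ordProj_mul_ordCompl_eq_self n p]
  rw [ArithmeticFunction.IsMultiplicative.map_mul_of_coprime
    ArithmeticFunction.isMultiplicative_sigma
    ((Nat.coprime_ordCompl hp.out hn).pow_left _)]
  congr 1
  · rw [ArithmeticFunction.sigma_apply, Nat.divisors_prime_pow hp.out, Finset.sum_map]
    apply Finset.sum_congr rfl
    intro i _
    simp [pow_one]

theorem claimE (m n : ℕ) (hp5 : 5 ≤ p) (hm : 0 < m) (hn : 0 < n) :
    ((p:ℤ))^m ∣ (((p:ℤ)) - 1) *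
        ((∑ i ∈ range m, if p^i ∣ n then p^i * sigmaNu (2 + (p-1)*p^(m-1) - 1) (n / p^i) else 0 : ℕ) : ℤ)
      - (((p:ℤ)) - 1) * (sigmaNu 1 n : ℤ) := by
  set a := n.factorization p with ha
  set u := n / p ^ a with hu
  set t := min m (a+1) with ht
  set σu : ℤ := (sigmaNu 1 u : ℤ) with hσu
  -- step 1 : Q ≡ (∑_{i<t} p^i) σu
  have hQ : ((p:ℤ))^m ∣
      ((∑ i ∈ range m, if p^i ∣ n then p^i * sigmaNu (2 + (p-1)*p^(m-1) - 1) (n / p^i) else 0 : ℕ) : ℤ)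
      - (∑ i ∈ range t, (p:ℤ)^i) * σu := by
    have hcast : ((∑ i ∈ range m, if p^i ∣ n then p^i * sigmaNu (2 + (p-1)*p^(m-1) - 1) (n / p^i) else 0 : ℕ) : ℤ)
        = ∑ i ∈ range m, (if p^i ∣ n then (p:ℤ)^i * (sigmaNu (2 + (p-1)*p^(m-1) - 1) (n / p^i) : ℤ) else 0) := by
      push_cast [apply_ite (fun z : ℕ => (z : ℤ))]
      rfl
    have hfilter : (range m).filter (fun i => p^i ∣ n) = range t := by
      ext i
      simp only [mem_filter, mem_range]
      rw [Nat.Prime.pow_dvd_iff_le_factorization hp.out hn.ne', ← ha]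
      omega
    have hsum2 : (∑ i ∈ range t, (p:ℤ)^i) * σu
        = ∑ i ∈ range m, (if p^i ∣ n then (p:ℤ)^i * σu else 0) := by
      rw [Finset.sum_mul, ← hfilter, Finset.sum_filter]
    rw [hcast, hsum2, ← Finset.sum_sub_distrib]
    apply Finset.dvd_sum
    intro i hi
    by_cases hdvd : p^i ∣ n
    · simp only [hdvd, if_true]
      rw [← mul_sub]
      apply Dvd.dvd.mul_left
      have hx : 0 < n / p^i := Nat.div_pos (Nat.le_of_dvd hn hdvd) (pow_pos hp.out.pos i)
      have := sigma_congr p m hp5 hm (n / p^i) hx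
      rwa [ordCompl_div_pow p n i hn.ne' hdvd] at this
    · simp [hdvd]
  -- step 2 : assemble with geometric sums
  have hgeom : ∀ s : ℕ, ((p:ℤ) - 1) * (∑ i ∈ range s, (p:ℤ)^i) = (p:ℤ)^s - 1 := by
    intro s
    rw [mul_comm, geom_sum_mul]
  have hσn : (sigmaNu 1 n : ℤ) = (∑ i ∈ range (a+1), (p:ℤ)^i) * σu := by
    rw [sigma_one_factor p n hn.ne', ← ha, ← hu, hσu]
    push_cast
    ring
  have hkey : (((p:ℤ)) - 1) *
      ((∑ i ∈ range m, if p^i ∣ n then p^i * sigmaNu (2 + (p-1)*p^(m-1) - 1) (n / p^i) else 0 : ℕ) : ℤ)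
      - (((p:ℤ)) - 1) * (sigmaNu 1 n : ℤ)
      = ((p:ℤ) - 1) * (((∑ i ∈ range m, if p^i ∣ n then p^i * sigmaNu (2 + (p-1)*p^(m-1) - 1) (n / p^i) else 0 : ℕ) : ℤ)
          - (∑ i ∈ range t, (p:ℤ)^i) * σu)
        + ((p:ℤ)^t - (p:ℤ)^(a+1)) * σu := by
    rw [hσn]
    have h1 := hgeom t
    have h2 := hgeom (a+1)
    linear_combination σu * h1 - σu * h2
  rw [hkey]
  apply dvd_add
  · exact (hQ.mul_left _)
  · rcases le_or_gt (a+1) m with hcase | hcase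
    · have : t = a + 1 := by omega
      rw [this]
      simp
    · have ht' : t = m := by omega
      rw [ht']
      apply Dvd.dvd.mul_right
      apply dvd_sub (dvd_refl _)
      exact pow_dvd_pow _ (by omega)

end ClaimE

/-- let `p ≥ 5` be prime, `m ≥ 1`, and `k = 2 + (p−1)p^{m−1}`. Then every
coefficient of `(p^m − 1)·E_2(q) − (p−1)·Σ_{i=1}^{m} p^{i−1}·E_k(q^{p^{i−1}})` has `p`-adic
valuation at least `m` (a coefficient equal to `0` having valuation `+∞`); that is,
`E_2 ≡ ((p−1)/(p^m−1))·Σ_{i=1}^{m} p^{i−1}·E_k|V_{p^{i−1}} (mod p^m)`. -/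
theorem E2_padic_congruence (p m : ℕ) (hp : p.Prime) (hp5 : 5 ≤ p) (hm : 0 < m)
    (n : ℕ) :
    PowerSeries.coeff n
        (PowerSeries.C ((p : ℚ) ^ m - 1) * Eis 2 -
          PowerSeries.C ((p : ℚ) - 1) *
            ∑ i ∈ Finset.range m,
              PowerSeries.C ((p : ℚ) ^ i) * Vop (p ^ i) (Eis (2 + (p - 1) * p ^ (m - 1)))) = 0 ∨
    (m : ℤ) ≤ padicValRat p (PowerSeries.coeff n
        (PowerSeries.C ((p : ℚ) ^ m - 1) * Eis 2 -
          PowerSeries.C ((p : ℚ) - 1) *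
            ∑ i ∈ Finset.range m,
              PowerSeries.C ((p : ℚ) ^ i) * Vop (p ^ i) (Eis (2 + (p - 1) * p ^ (m - 1))))) := by
  
  haveI : Fact p.Prime := ⟨hp⟩
  have hp1R : (1:ℝ) < p := by exact_mod_cast (by omega : 1 < p)
  have hb2 : (bernoulli 2 : ℚ) = 1/6 := by norm_num [bernoulli]
  -- simplify the coefficient
  rw [map_sub, PowerSeries.coeff_C_mul, PowerSeries.coeff_C_mul, map_sum]
  simp only [PowerSeries.coeff_C_mul, Vop, Eis, PowerSeries.coeff_mk]
  by_cases hn : n = 0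
  · left
    subst hn
    simp only [if_pos rfl, dvd_zero, if_true, Nat.zero_div]
    have hg := geom_sum_mul ((p:ℚ)) m
    have : ∑ i ∈ Finset.range m, (p:ℚ)^i * 1 = ∑ i ∈ Finset.range m, (p:ℚ)^i := by
      simp
    rw [this]
    linear_combination -hg
  · -- n ≥ 1
    have hn0 : 0 < n := Nat.pos_of_ne_zero hn
    set K := 2 + (p-1)*p^(m-1) with hK
    have hmK : m ≤ (p-1) * p^(m-1) := by
      have h1 : m - 1 < 2^(m-1) := Nat.lt_two_pow_self
      have h2 : 2^(m-1) ≤ p^(m-1) := Nat.pow_le_pow_left (by omega) _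
      have h3 : p^(m-1) ≤ (p-1) * p^(m-1) := Nat.le_mul_of_pos_left _ (by omega)
      omega
    set Qn : ℕ := ∑ i ∈ Finset.range m, if p^i ∣ n then p^i * sigmaNu (K-1) (n/p^i) else 0 with hQn
    -- rewrite the coefficient into closed form
    have hif : (if n = 0 then (1:ℚ) else -(2 * (2:ℕ) / (bernoulli 2)) * (sigmaNu (2-1) n : ℚ))
        = -24 * (sigmaNu 1 n : ℚ) := by
      rw [if_neg hn, hb2]
      norm_num
    rw [hif]
    have hsum : (∑ i ∈ Finset.range m, (p:ℚ)^i *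
          (if p^i ∣ n then (if n / p^i = 0 then (1:ℚ)
            else -(2 * (K:ℕ) / (bernoulli K)) * (sigmaNu (K-1) (n/p^i) : ℚ)) else 0))
        = -(2 * (K:ℚ) / (bernoulli K)) * (Qn : ℚ) := by
      have hQc : (Qn : ℚ) = ∑ i ∈ Finset.range m,
          (if p^i ∣ n then (p:ℚ)^i * (sigmaNu (K-1) (n/p^i) : ℚ) else 0) := by
        rw [hQn]
        push_cast [apply_ite (fun z : ℕ => (z : ℚ))]
        rfl
      rw [hQc, Finset.mul_sum]
      apply Finset.sum_congr rfl
      intro i _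
      by_cases hdvd : p^i ∣ n
      · have hdiv0 : ¬ (n / p^i = 0) := by
          have : 0 < n / p^i := Nat.div_pos (Nat.le_of_dvd hn0 hdvd) (pow_pos hp.pos i)
          omega
        rw [if_pos hdvd, if_pos hdvd, if_neg hdiv0]
        push_cast
        ring
      · rw [if_neg hdvd, if_neg hdvd]
        ring
    rw [hsum]
    set A : ℚ := ((p:ℚ)^m - 1) * (-24 * (sigmaNu 1 n : ℚ))
      - ((p:ℚ) - 1) * (-(2 * (K:ℚ) / (bernoulli K)) * (Qn : ℚ)) with hA
    rcases eq_or_ne A 0 with hA0 | hAne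
    · exact Or.inl hA0
    right
    -- the p-adic estimate
    obtain ⟨hbern, hXn⟩ := bern_key p m hm hp5
    set ε : ℝ := (p:ℝ)^(-(m:ℤ)) with hε
    have hBne : bernoulli K ≠ 0 := by
      intro h
      rw [hK] at h  -- ensure match
      rw [h] at hXn
      simp at hXn
    have hBqne : ((bernoulli K : ℚ) : ℚ_[p]) ≠ 0 := by
      exact_mod_cast (Rat.cast_ne_zero (α := ℚ_[p])).mpr hBne
    have hAcast : ((A : ℚ) : ℚ_[p])
        = -24*(((p:ℚ_[p]))^m - 1)*((sigmaNu 1 n : ℕ) : ℚ_[p])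
          + (((p:ℚ_[p])) - 1) * (2*((K:ℕ):ℚ_[p])/((bernoulli K : ℚ) : ℚ_[p]))*((Qn:ℕ) : ℚ_[p]) := by
      rw [hA]
      push_cast
      ring
    set X : ℚ_[p] := (1 - ((p:ℚ_[p]))^(K-1)) * ((bernoulli K : ℚ) : ℚ_[p]) with hX
    have hsplit : X * ((A : ℚ) : ℚ_[p])
        = (((-24 * (sigmaNu 1 n : ℤ) * (p:ℤ)^m : ℤ)) : ℚ_[p]) * X
          + (((24 * (sigmaNu 1 n : ℤ) : ℤ)) : ℚ_[p]) * (X - ((K:ℕ):ℚ_[p])*(1-(p:ℚ_[p]))/12)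
          + (((-2 * (K:ℤ) * (p:ℤ)^(K-1) * ((p:ℤ)-1) * (Qn:ℤ) : ℤ)) : ℚ_[p])
          + (((2 * (K:ℤ) * ((((p:ℤ))-1) * (Qn:ℤ) - (((p:ℤ))-1)*(sigmaNu 1 n:ℤ)) : ℤ)) : ℚ_[p]) := by
      rw [hAcast, hX]
      push_cast
      field_simp
      ring
    have tri : ∀ a b : ℚ_[p], ‖a‖ ≤ ε → ‖b‖ ≤ ε → ‖a + b‖ ≤ ε := fun a b ha hb =>
      le_trans (Padic.nonarchimedean a b) (max_le ha hb)
    have hs1 : ‖(((-24 * (sigmaNu 1 n : ℤ) * (p:ℤ)^m : ℤ)) : ℚ_[p]) * X‖ ≤ ε := by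
      rw [norm_mul, hXn, mul_one, hε]
      exact int_norm_le_of_dvd p _ m (Dvd.dvd.mul_left (dvd_refl _) _)
    have hs2 : ‖(((24 * (sigmaNu 1 n : ℤ) : ℤ)) : ℚ_[p]) * (X - ((K:ℕ):ℚ_[p])*(1-(p:ℚ_[p]))/12)‖ ≤ ε := by
      rw [norm_mul]
      calc ‖(((24 * (sigmaNu 1 n : ℤ) : ℤ)) : ℚ_[p])‖ * ‖X - ((K:ℕ):ℚ_[p])*(1-(p:ℚ_[p]))/12‖
          ≤ 1 * ε := by
            apply mul_le_mul (Padic.norm_int_le_one _) ?_ (norm_nonneg _) zero_le_one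
            exact hbern
        _ = ε := one_mul ε
    have hs3 : ‖(((-2 * (K:ℤ) * (p:ℤ)^(K-1) * ((p:ℤ)-1) * (Qn:ℤ) : ℤ)) : ℚ_[p])‖ ≤ ε := by
      rw [hε]
      apply int_norm_le_of_dvd
      have h1 : ((p:ℤ))^m ∣ ((p:ℤ))^(K-1) := pow_dvd_pow _ (by omega)
      exact dvd_mul_of_dvd_left (dvd_mul_of_dvd_left (Dvd.dvd.mul_left h1 _) _) _
    have hs4 : ‖(((2 * (K:ℤ) * ((((p:ℤ))-1) * (Qn:ℤ) - (((p:ℤ))-1)*(sigmaNu 1 n:ℤ)) : ℤ)) : ℚ_[p])‖ ≤ ε := by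
      rw [hε]
      apply int_norm_le_of_dvd
      exact Dvd.dvd.mul_left (claimE p m n hp5 hm hn0) _
    have hXA : ‖X * ((A : ℚ) : ℚ_[p])‖ ≤ ε := by
      rw [hsplit]
      exact tri _ _ (tri _ _ (tri _ _ hs1 hs2) hs3) hs4
    have hAnorm : ‖((A : ℚ) : ℚ_[p])‖ ≤ ε := by
      rw [norm_mul, hXn, one_mul] at hXA
      exact hXA
    -- convert to padicValRat
    rw [Padic.eq_padicNorm, padicNorm.eq_zpow_of_nonzero hAne, hε] at hAnorm
    have hcast2 : (((p:ℚ)^(-(padicValRat p A)) : ℚ) : ℝ) = (p:ℝ)^(-(padicValRat p A)) := by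
      push_cast
      ring
    rw [hcast2] at hAnorm
    have := (zpow_le_zpow_iff_right₀ hp1R).mp hAnorm
    omega
end Padic
end

section
/- The numbers b_t(a) := (−4)^t·(2t+1)!·w_t(a) satisfy the recursion b_t(a) = (1/(8a(2a+1)))·[(2a−1)²·b_t(a−1) − 8t(2t+1)·b_{t−1}(a−1)] for all integers a ≥ 1 and 0 ≤ t ≤ a, where b_0(0) := 1 and b_t(a) := 0 whenever t < 0 or t > a. Equivalently, 8a(2a+1)·w_t(a) = (2a−1)²·w_t(a−1) + w_{t−1}(a−1) with the conventions w_a(a−1) := 0 and w_{−1}(a−1) := 0. -/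
open Finset PowerSeries

/-- The weights `w_t(a) = (C(2a,a)/(16^a (2a+1))) Σ_{0 ≤ ℓ_1 < ⋯ < ℓ_t < a} ∏_j 1/(2ℓ_j+1)²`
(the inner sum is `1` when `t = 0`, and empty when `t > a`). -/
def w (t a : ℕ) : ℚ :=
  (((2*a).choose a : ℚ) / (16 ^ a * (2 * a + 1))) *
    ∑ f ∈ Finset.univ.filter (fun f : Fin t → Fin a => ∀ i j, i < j → f i < f j),
      ∏ j, 1 / ((2 * ((f j : ℕ) : ℚ) + 1) ^ 2)

/-- `b_t(a) = (−4)^t·(2t+1)!·w_t(a)` for `0 ≤ t ≤ a`, and `b_t(a) = 0` for `t < 0` or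
`t > a` (for `0 ≤ t ≤ a` this is consistent, since `w_t(a) = 0` whenever `t > a`);
`b_0(0) = 1`. -/
def b (t : ℤ) (a : ℕ) : ℚ :=
  if 0 ≤ t ∧ t ≤ (a : ℤ) then
    (-4 : ℚ) ^ t.toNat * ((2 * t.toNat + 1).factorial : ℚ) * w t.toNat a
  else 0

def S (t a : ℕ) : ℚ :=
  ∑ s ∈ (Finset.range a).powersetCard t, ∏ ℓ ∈ s, 1 / ((2 * (ℓ : ℚ) + 1) ^ 2)


lemma sum_eq_S (t a : ℕ) :
    (∑ f ∈ Finset.univ.filter (fun f : Fin t → Fin a => ∀ i j, i < j → f i < f j),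
      ∏ j, 1 / ((2 * ((f j : ℕ) : ℚ) + 1) ^ 2)) = S t a := by
  classical
  unfold S
  refine Finset.sum_bij' (i := fun f _ => Finset.image (fun j => ((f j : ℕ))) Finset.univ)
    (j := fun s hs => fun i : Fin t =>
      (⟨s.orderEmbOfFin (Finset.mem_powersetCard.1 hs).2 i, by
        have h1 := Finset.orderEmbOfFin_mem s (Finset.mem_powersetCard.1 hs).2 i
        have h2 := (Finset.mem_powersetCard.1 hs).1 h1
        exact Finset.mem_range.1 h2⟩ : Fin a))
    ?_ ?_ ?_ ?_ ?_
  · intro f hf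
    rw [Finset.mem_filter] at hf
    have hmono : StrictMono f := fun i j hij => hf.2 i j hij
    have hinj : Function.Injective (fun j => ((f j : ℕ))) := by
      intro i j hij
      exact hmono.injective (Fin.val_injective hij)
    rw [Finset.mem_powersetCard]
    constructor
    · intro x hx
      simp only [Finset.mem_image] at hx
      obtain ⟨j, _, rfl⟩ := hx
      exact Finset.mem_range.2 (f j).2
    · rw [Finset.card_image_of_injective _ hinj, Finset.card_univ, Fintype.card_fin]
  · intro s hs
    rw [Finset.mem_filter]
    refine ⟨Finset.mem_univ _, ?_⟩
    intro i j hij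
    have := (s.orderEmbOfFin (Finset.mem_powersetCard.1 hs).2).strictMono hij
    exact this
  · intro f hf
    rw [Finset.mem_filter] at hf
    have hmono : StrictMono fun j => ((f j : ℕ)) := by
      intro i j hij
      exact hf.2 i j hij
    have hc : (Finset.image (fun j => ((f j : ℕ))) Finset.univ).card = t := by
      rw [Finset.card_image_of_injective _ fun i j hij => hmono.injective hij,
        Finset.card_univ, Fintype.card_fin]
    funext i
    have key := Finset.orderEmbOfFin_unique hc
      (f := fun j => ((f j : ℕ)))
      (fun x => Finset.mem_image_of_mem (fun j => ((f j : ℕ))) (Finset.mem_univ x)) hmono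
    apply Fin.ext
    have := (congrFun key i).symm
    simpa using this
  · intro s hs
    have hcard := (Finset.mem_powersetCard.1 hs).2
    have hsub : Finset.image (fun i : Fin t => (s.orderEmbOfFin hcard i : ℕ)) Finset.univ ⊆ s := by
      intro x hx
      simp only [Finset.mem_image] at hx
      obtain ⟨j, _, rfl⟩ := hx
      exact Finset.orderEmbOfFin_mem s hcard j
    apply Finset.eq_of_subset_of_card_le hsub
    rw [Finset.card_image_of_injective _ (s.orderEmbOfFin hcard).injective,
      Finset.card_univ, Fintype.card_fin, hcard]
  · intro f hf
    rw [Finset.mem_filter] at hf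
    have hinj : Function.Injective (fun j => ((f j : ℕ))) := by
      intro i j hij
      exact (show StrictMono f from fun i j hij => hf.2 i j hij).injective (Fin.val_injective hij)
    rw [Finset.prod_image (fun i _ j _ h => hinj h)]

lemma S_zero (a : ℕ) : S 0 a = 1 := by simp [S]

lemma S_gt {t a : ℕ} (h : a < t) : S t a = 0 := by
  unfold S
  rw [Finset.powersetCard_eq_empty.2 (by simpa using h), Finset.sum_empty]

lemma S_succ (t a : ℕ) :
    S (t+1) (a+1) = S (t+1) a + (1 / ((2 * (a:ℚ) + 1) ^ 2)) * S t a := by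
  classical
  unfold S
  rw [Finset.range_add_one, Finset.powersetCard_succ_insert (by simp) t,
    Finset.sum_union, Finset.sum_image]
  · congr 1
    rw [Finset.mul_sum]
    apply Finset.sum_congr rfl
    intro s hs
    have ha : a ∉ s := fun h => by
      simpa using (Finset.mem_powersetCard.1 hs).1 h
    rw [Finset.prod_insert ha]
  · intro s hs u hu h
    have ha : a ∉ s := fun h => by simpa using (Finset.mem_powersetCard.1 hs).1 h
    have hb : a ∉ u := fun h => by simpa using (Finset.mem_powersetCard.1 hu).1 h
    have := congrArg (Finset.erase · a) h
    simpa [Finset.erase_insert ha, Finset.erase_insert hb] using this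
  · rw [Finset.disjoint_right]
    intro s hs
    simp only [Finset.mem_image] at hs
    obtain ⟨u, hu, rfl⟩ := hs
    intro hmem
    have := (Finset.mem_powersetCard.1 hmem).1 (Finset.mem_insert_self a u)
    simp at this

lemma w_eq (t a : ℕ) :
    w t a = (((2*a).choose a : ℚ) / (16 ^ a * (2 * a + 1))) * S t a := by
  rw [w, sum_eq_S]

lemma w_gt {t a : ℕ} (h : a < t) : w t a = 0 := by
  rw [w_eq, S_gt h, mul_zero]

lemma w_key (t n : ℕ) :
    8 * ((n:ℚ)+1) * (2 * ((n:ℚ)+1) + 1) * w t (n+1) =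
      (2 * ((n:ℚ)+1) - 1) ^ 2 * w t n + (if t = 0 then (0:ℚ) else w (t-1) n) := by
  have hn1 : ((n:ℚ)+1) ≠ 0 := by positivity
  have h16 : (16:ℚ)^n ≠ 0 := by positivity
  have h1 : (2*(n:ℚ)+1) ≠ 0 := by positivity
  have h3 : (2*((n:ℚ)+1)+1) ≠ 0 := by positivity
  have hC : (((2*(n+1)).choose (n+1) : ℕ) : ℚ)
      = 2*(2*(n:ℚ)+1) * (((2*n).choose n : ℕ):ℚ) / ((n:ℚ)+1) := by
    rw [eq_div_iff hn1]
    have h2 := Nat.succ_mul_centralBinom_succ n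
    simp only [Nat.centralBinom] at h2
    have h3 : (((n+1) * ((2*(n+1)).choose (n+1)) : ℕ) : ℚ)
        = ((2*(2*n+1) * ((2*n).choose n) : ℕ) : ℚ) := by rw [h2]
    push_cast at h3
    linarith [h3]
  cases t with
  | zero =>
    simp only [if_pos rfl, add_zero]
    rw [w_eq, w_eq, S_zero, S_zero]
    push_cast
    rw [hC]
    field_simp
    ring
  | succ s =>
    simp only [Nat.succ_sub_one, if_neg (Nat.succ_ne_zero s)]
    rw [w_eq, w_eq, w_eq, S_succ]
    push_cast
    rw [hC]
    have h2 : (2*(n:ℚ)+1)^2 ≠ 0 := by positivity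
    field_simp
    ring

/-- for `a ≥ 1` and `0 ≤ t ≤ a`, the numbers `b_t(a)` satisfy
`b_t(a) = (1/(8a(2a+1)))·[(2a−1)²·b_t(a−1) − 8t(2t+1)·b_{t−1}(a−1)]`; equivalently,
`8a(2a+1)·w_t(a) = (2a−1)²·w_t(a−1) + w_{t−1}(a−1)` with the conventions
`w_a(a−1) = 0` and `w_{−1}(a−1) = 0`. -/
theorem b_recursion (a : ℕ) (ha : 1 ≤ a) (t : ℤ) (ht0 : 0 ≤ t) (hta : t ≤ (a : ℤ)) :
    b t a = 1 / (8 * (a : ℚ) * (2 * a + 1)) *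
        ((2 * (a : ℚ) - 1) ^ 2 * b t (a - 1) - 8 * (t : ℚ) * (2 * (t : ℚ) + 1) * b (t - 1) (a - 1)) ∧
    8 * (a : ℚ) * (2 * a + 1) * w t.toNat a =
      (2 * (a : ℚ) - 1) ^ 2 * w t.toNat (a - 1) +
        (if t = 0 then 0 else w (t - 1).toNat (a - 1)) := by
  obtain ⟨n, rfl⟩ : ∃ n, a = n + 1 := ⟨a - 1, (Nat.succ_pred_eq_of_pos ha).symm⟩
  lift t to ℕ using ht0 with k
  have hka : k ≤ n + 1 := by exact_mod_cast hta
  have hD : (8 * ((n:ℚ)+1) * (2 * ((n:ℚ)+1) + 1)) ≠ 0 := by positivity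
  have han : n + 1 - 1 = n := rfl
  have hite : (if (k:ℤ) = 0 then (0:ℚ) else w ((k:ℤ) - 1).toNat (n + 1 - 1)) =
      (if k = 0 then (0:ℚ) else w (k-1) n) := by
    cases k with
    | zero => simp
    | succ m =>
      rw [if_neg (by exact_mod_cast Nat.succ_ne_zero m : ¬ ((m+1:ℕ):ℤ) = 0),
        if_neg (Nat.succ_ne_zero m), han]
      congr 1
      omega
  have hsnd : 8 * ((n+1 : ℕ) : ℚ) * (2 * ((n+1:ℕ):ℚ) + 1) * w (k:ℤ).toNat (n+1) =
      (2 * ((n+1:ℕ):ℚ) - 1) ^ 2 * w (k:ℤ).toNat (n + 1 - 1) +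
        (if (k:ℤ) = 0 then 0 else w ((k:ℤ) - 1).toNat (n + 1 - 1)) := by
    rw [hite, han]
    simpa using w_key k n
  refine ⟨?_, hsnd⟩
  have hb0 : b (k:ℤ) (n+1) = (-4:ℚ)^k * ((2*k+1).factorial : ℚ) * w k (n+1) := by
    unfold b
    rw [if_pos ⟨Int.natCast_nonneg k, hta⟩]
    simp
  have hb1 : b (k:ℤ) n = (-4:ℚ)^k * ((2*k+1).factorial : ℚ) * w k n := by
    unfold b
    split_ifs with h
    · simp
    · have hnk : n < k := by
        by_contra hc
        exact h ⟨Int.natCast_nonneg k, by exact_mod_cast not_lt.1 hc⟩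
      rw [w_gt hnk, mul_zero]
  rw [han, hb0, hb1]
  cases k with
  | zero =>
    have hbneg : b (((0:ℕ):ℤ) - 1) n = 0 := by
      unfold b
      rw [if_neg]
      push_neg
      intro h
      omega
    rw [hbneg]
    have wk := w_key 0 n
    norm_num at wk
    push_cast
    simp only [pow_zero, one_mul, mul_zero, Nat.factorial]
    field_simp
    linear_combination wk
  | succ m =>
    have hmn : (m:ℤ) ≤ (n:ℤ) := by omega
    have hbm : b ((((m+1:ℕ)):ℤ) - 1) n = (-4:ℚ)^m * ((2*m+1).factorial : ℚ) * w m n := by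
      have he : ((((m+1:ℕ)):ℤ)) - 1 = (m:ℤ) := by push_cast; ring
      rw [he]
      unfold b
      rw [if_pos ⟨Int.natCast_nonneg m, hmn⟩]
      simp
    rw [hbm]
    have wk := w_key (m+1) n
    rw [if_neg (Nat.succ_ne_zero m), Nat.add_sub_cancel] at wk
    have hfact : ((2*(m+1)+1).factorial : ℚ)
        = (2*(m:ℚ)+3) * ((2*(m:ℚ)+2) * ((2*m+1).factorial : ℚ)) := by
      have h4 : (2*(m+1)+1) = (2*m+1) + 1 + 1 := by ring
      rw [h4, Nat.factorial_succ, Nat.factorial_succ]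
      push_cast
      ring
    rw [hfact]
    push_cast
    field_simp
    linear_combination ((-4:ℚ)^(m+1) * 2 * (2*(m:ℚ)+3)) * wk
end
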